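/- arXiv:1206.0398 — 3 statements merged into one kernel-verified Lean document; each statement's English description precedes it below -/
import Mathlib

section
/- (Matthews bound) For an irreducible Markov chain on a finite state space V, the cover time satisfies t_cov ≤ t_hit · (log|V| + 1), where t_cov = max_x E^x(τ_cov) and t_hit = max_{x,y} E^x(τ_y). -/
noncomputable section
open scoped Classical
open MeasureTheory ENNReal Filter

variable {V : Type*}

/-- Dirichlet energy of a function on a weighted graph. -/
def energy [Fintype V] (μ : V → V → ℝ) (f : V → ℝ) : ℝ :=
  (1/2) * ∑ u : V, ∑ v : V, μ u v * (f u - f v)^2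

/-- Effective resistance between two vertices of a finite weighted graph. -/
def Reff [Fintype V] (μ : V → V → ℝ) (x y : V) : ℝ :=
  if x = y then 0
  else (sInf {E : ℝ | ∃ f : V → ℝ, f x = 1 ∧ f y = 0 ∧ E = energy μ f})⁻¹

/-- Resistance diameter. -/
def diamR [Fintype V] (μ : V → V → ℝ) : ℝ := ⨆ x : V, ⨆ y : V, Reff μ x y

/-- Resistance ball. -/
def ballEff [Fintype V] (μ : V → V → ℝ) (x : V) (r : ℝ) : Set V := {y | Reff μ x y ≤ r}

/-- Packing number by resistance balls of radius `r`. -/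
def nPac [Fintype V] (μ : V → V → ℝ) (r : ℝ) : ℕ :=
  sSup {m | ∃ s : Finset V, s.card = m ∧
    (s : Set V).Pairwise fun a b => Disjoint (ballEff μ a r) (ballEff μ b r)}

/-- Covering number by resistance balls of radius `r`. -/
def nCov [Fintype V] (μ : V → V → ℝ) (r : ℝ) : ℕ :=
  sInf {m | ∃ s : Finset V, s.card = m ∧ ∀ y : V, ∃ x ∈ s, y ∈ ballEff μ x r}

/-- Total weight `μ(G) = ∑_{x,y} μ_{xy}`. -/
def totalWeight [Fintype V] (μ : V → V → ℝ) : ℝ := ∑ x : V, ∑ y : V, μ x y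

/-- Graph induced by the nonzero weights. -/
def weightGraph (μ : V → V → ℝ) : SimpleGraph V where
  Adj x y := x ≠ y ∧ (μ x y ≠ 0 ∨ μ y x ≠ 0)
  symm := ⟨fun x y h => ⟨h.1.symm, h.2.symm⟩⟩
  loopless := ⟨fun x h => h.1 rfl⟩

/-- Unit weights on the edges of a simple graph. -/
def unitWeight (G : SimpleGraph V) (x y : V) : ℝ := if G.Adj x y then 1 else 0

/-- One-step transition probabilities of the random walk with conductances μ. -/
def walkStep [Fintype V] (μ : V → V → ℝ) (x y : V) : ℝ := μ x y / ∑ z : V, μ x z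

/-- `P x` is the law on path space of the Markov chain with one-step transition
matrix `p` started at `x`, characterized by its cylinder probabilities. -/
def IsChainLaw [Fintype V] [MeasurableSpace V] (p : V → V → ℝ)
    (P : V → Measure (ℕ → V)) : Prop :=
  (∀ x, IsProbabilityMeasure (P x)) ∧
  ∀ (x : V) (n : ℕ) (s : ℕ → V),
    P x {ω | ∀ i ≤ n, ω i = s i} =
      (if s 0 = x then 1 else 0) *
        ∏ i ∈ Finset.range n, ENNReal.ofReal (p (s i) (s (i+1)))

/-- Hitting time of a vertex along a path. -/
def hitTime (y : V) (ω : ℕ → V) : ℝ≥0∞ := ⨅ n ∈ {n : ℕ | ω n = y}, (n : ℝ≥0∞)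

/-- Cover time along a path: first time every vertex has been visited. -/
def covTime [Fintype V] (ω : ℕ → V) : ℝ≥0∞ := ⨆ y : V, hitTime y ω

/-- Expected hitting time `E^x (τ_y)`. -/
def eHit [MeasurableSpace V] (P : V → Measure (ℕ → V)) (x y : V) : ℝ≥0∞ :=
  ∫⁻ ω, hitTime y ω ∂(P x)

/-- Maximal hitting time `t_hit = max_{x,y} E^x(τ_y)`. -/
def tHit [Fintype V] [MeasurableSpace V] (P : V → Measure (ℕ → V)) : ℝ≥0∞ :=
  ⨆ x : V, ⨆ y : V, eHit P x y

/-- Cover time `t_cov = max_x E^x(τ_cov)`. -/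
def tCov [Fintype V] [MeasurableSpace V] (P : V → Measure (ℕ → V)) : ℝ≥0∞ :=
  ⨆ x : V, ∫⁻ ω, covTime ω ∂(P x)

end

namespace MatthewsAux
open MeasureTheory ENNReal
set_option linter.unusedVariables false
set_option linter.unusedSectionVars false

variable {V : Type*} [Fintype V] [DecidableEq V] [Nonempty V]
-- part 2 merged below

lemma hitTime_le_iff {y : V} {ω : ℕ → V} {m : ℕ} :
    hitTime y ω ≤ (m : ℝ≥0∞) ↔ ∃ i ≤ m, ω i = y := by
  constructor
  · intro h
    by_cases h' : ∃ n, ω n = y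
    · have h1 : hitTime y ω = (Nat.find h' : ℝ≥0∞) := by
        apply le_antisymm
        · exact iInf₂_le (Nat.find h') (Nat.find_spec h')
        · exact le_iInf₂ fun n hn => Nat.cast_le.mpr (Nat.find_le hn)
      rw [h1] at h
      exact ⟨Nat.find h', Nat.cast_le.mp h, Nat.find_spec h'⟩
    · push_neg at h'
      rw [show hitTime y ω = ⊤ by simp [hitTime, h']] at h
      exact absurd h (by simp)
  · rintro ⟨i, him, hi⟩
    exact le_trans (iInf₂_le i hi) (Nat.cast_le.mpr him)

lemma hitTime_eq_top {y : V} {ω : ℕ → V} (h : ∀ n, ω n ≠ y) : hitTime y ω = ⊤ := by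
  simp [hitTime, h]

lemma lt_hitTime_iff {y : V} {ω : ℕ → V} {m : ℕ} :
    (m : ℝ≥0∞) < hitTime y ω ↔ ∀ i ≤ m, ω i ≠ y := by
  rw [← not_le, hitTime_le_iff]; push_neg; rfl

lemma hitTime_nat_or_top (y : V) (ω : ℕ → V) :
    hitTime y ω = ⊤ ∨ ∃ n : ℕ, hitTime y ω = (n : ℝ≥0∞) := by
  by_cases h : ∃ n, ω n = y
  · refine Or.inr ⟨Nat.find h, le_antisymm (hitTime_le_iff.mpr ⟨_, le_rfl, Nat.find_spec h⟩)
      (le_iInf₂ fun n hn => Nat.cast_le.mpr (Nat.find_le hn))⟩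
  · push_neg at h; exact Or.inl (hitTime_eq_top h)

lemma hitTime_shift {u : V} {ω : ℕ → V} {m : ℕ} (h : ∀ i ≤ m, ω i ≠ u) :
    hitTime u ω = (m : ℝ≥0∞) + hitTime u (fun k => ω (m + k)) := by
  apply le_antisymm
  · rcases hitTime_nat_or_top u (fun k => ω (m + k)) with ht | ⟨k, hk⟩
    · rw [ht]; simp
    · rw [hk]
      obtain ⟨j, hj, hju⟩ := hitTime_le_iff.mp hk.le
      calc hitTime u ω ≤ ((m + j : ℕ) : ℝ≥0∞) := hitTime_le_iff.mpr ⟨m + j, le_rfl, hju⟩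
        _ ≤ (m : ℝ≥0∞) + (k : ℝ≥0∞) := by
            rw [Nat.cast_add]
            gcongr
  · rcases hitTime_nat_or_top u ω with ht | ⟨n, hn⟩
    · rw [ht]; exact le_top
    · obtain ⟨i, hin, hiu⟩ := hitTime_le_iff.mp hn.le
      have hni : (n : ℝ≥0∞) ≤ i := hn ▸ hitTime_le_iff.mpr ⟨i, le_rfl, hiu⟩
      have hie : i = n := le_antisymm hin (Nat.cast_le.mp hni)
      subst hie
      have hmi : m < i := lt_of_not_ge fun hc => h i hc hiu
      have : hitTime u (fun k => ω (m + k)) ≤ ((i - m : ℕ) : ℝ≥0∞) :=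
        hitTime_le_iff.mpr ⟨i - m, le_rfl, by simpa [Nat.add_sub_cancel' hmi.le] using hiu⟩
      calc (m : ℝ≥0∞) + hitTime u (fun k => ω (m + k)) ≤ (m : ℝ≥0∞) + ((i - m : ℕ) : ℝ≥0∞) := by gcongr
        _ = (i : ℝ≥0∞) := by
            rw [← Nat.cast_add, Nat.add_sub_cancel' hmi.le]
        _ ≤ hitTime u ω := hn.ge

/-- Cover time of a finite set of states. -/
noncomputable def covS (S : Finset V) (ω : ℕ → V) : ℝ≥0∞ := S.sup fun y => hitTime y ω

lemma covS_le_iff {S : Finset V} {ω : ℕ → V} {m : ℕ} :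
    covS S ω ≤ (m : ℝ≥0∞) ↔ ∀ y ∈ S, ∃ i ≤ m, ω i = y := by
  simp only [covS, Finset.sup_le_iff, hitTime_le_iff]

lemma covS_nat_or_top (S : Finset V) (ω : ℕ → V) :
    covS S ω = ⊤ ∨ ∃ n : ℕ, covS S ω = (n : ℝ≥0∞) := by
  induction S using Finset.induction with
  | empty => exact Or.inr ⟨0, by simp [covS]⟩
  | @insert a S ha ih =>
    rw [covS, Finset.sup_insert]
    rcases hitTime_nat_or_top a ω with ht | ⟨n, hn⟩
    · exact Or.inl (by rw [ht]; simp)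
    · rcases ih with ht | ⟨k, hk⟩
      · left; rw [show S.sup (fun y => hitTime y ω) = ⊤ from ht]; simp
      · right
        exact ⟨max n k, by
          rw [hn, show S.sup (fun y => hitTime y ω) = (k:ℝ≥0∞) from hk]
          rcases le_total n k with h | h
          · rw [sup_eq_right.mpr h, sup_eq_right.mpr (Nat.cast_le.mpr h : (n:ℝ≥0∞) ≤ k)]
          · rw [sup_eq_left.mpr h, sup_eq_left.mpr (Nat.cast_le.mpr h : (k:ℝ≥0∞) ≤ n)]⟩

lemma covTime_eq_covS (ω : ℕ → V) : covTime ω = covS Finset.univ ω := by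
  rw [covTime, covS, Finset.sup_eq_iSup]
  simp

section Meas
variable [MeasurableSpace V]

/-- Cylinder set determined by the first `n+1` coordinates. -/
def cylSet (n : ℕ) (s : ℕ → V) : Set (ℕ → V) := {ω | ∀ i ≤ n, ω i = s i}

/-- Shift on path space. -/
def shift (m : ℕ) (ω : ℕ → V) : ℕ → V := fun k => ω (m + k)

lemma measurable_shift (m : ℕ) : Measurable (shift (V := V) m) :=
  measurable_pi_lambda _ fun k => measurable_pi_apply (m + k)

lemma measurable_coord (hm : ∀ y : V, MeasurableSet ({y} : Set V)) (n : ℕ) (y : V) : MeasurableSet {ω : ℕ → V | ω n = y} := by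
  have h : {ω : ℕ → V | ω n = y} = (fun ω : ℕ → V => ω n) ⁻¹' {y} := rfl
  rw [h]
  exact measurable_pi_apply n (hm y)

lemma measurable_hitTime (hm : ∀ y : V, MeasurableSet ({y} : Set V)) (y : V) : Measurable fun ω : ℕ → V => hitTime y ω := by
  have h : (fun ω : ℕ → V => hitTime y ω)
      = fun ω => ⨅ n : ℕ, (if ω n = y then (n : ℝ≥0∞) else ⊤) := by
    funext ω
    rw [hitTime]
    exact iInf_congr fun n => iInf_eq_if _
  rw [h]
  exact Measurable.iInf fun n =>
    Measurable.ite (measurable_coord hm n y) measurable_const measurable_const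

lemma measurable_covS (hm : ∀ y : V, MeasurableSet ({y} : Set V)) (S : Finset V) : Measurable fun ω : ℕ → V => covS S ω := by
  classical
  induction S using Finset.induction with
  | empty =>
    have : (fun ω : ℕ → V => covS ∅ ω) = fun _ => (⊥ : ℝ≥0∞) := by
      funext ω; rw [covS, Finset.sup_empty]
    rw [this]; exact measurable_const
  | @insert a S ha ih =>
    have : (fun ω : ℕ → V => covS (insert a S) ω)
        = fun ω => hitTime a ω ⊔ covS S ω := by
      funext ω; rw [covS, Finset.sup_insert]; rfl
    rw [this]
    exact (measurable_hitTime hm a).sup ih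

lemma measurable_cylSet (hm : ∀ y : V, MeasurableSet ({y} : Set V)) (n : ℕ) (s : ℕ → V) : MeasurableSet (cylSet n s) := by
  have h : cylSet n s = ⋂ (i : ℕ) (_ : i ≤ n), {ω : ℕ → V | ω i = s i} := by
    ext ω; simp [cylSet]
  rw [h]
  exact MeasurableSet.iInter fun i => MeasurableSet.iInter fun _ => measurable_coord hm i (s i)

/-- Extension of a finite path to an infinite one. -/
def extFun (n : ℕ) (v : Fin (n+1) → V) : ℕ → V :=
  fun j => v ⟨min j n, Nat.lt_succ_of_le (min_le_right _ _)⟩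

lemma extFun_eq {n : ℕ} {v : Fin (n+1) → V} {j : ℕ} (h : j ≤ n) :
    extFun n v j = v ⟨j, Nat.lt_succ_of_le h⟩ := by
  simp only [extFun]
  congr 1
  exact Fin.ext (by simpa using Nat.min_eq_left h)

/-- The collection of cylinder sets. -/
def cylinders : Set (Set (ℕ → V)) := {C | ∃ n s, C = cylSet n s}

lemma coord_eq_union (i : ℕ) (a : V) :
    {ω : ℕ → V | ω i = a}
      = ⋃ (v : Fin (i+1) → V) (_ : v ⟨i, Nat.lt_succ_self i⟩ = a), cylSet i (extFun i v) := by
  ext ω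
  simp only [Set.mem_setOf_eq, Set.mem_iUnion]
  constructor
  · intro h
    refine ⟨fun j => ω j, by simpa using h, ?_⟩
    intro j hj
    rw [extFun_eq hj]
  · rintro ⟨v, hv, hc⟩
    have h2 := hc i le_rfl
    rw [extFun_eq le_rfl] at h2
    rw [h2, hv]

lemma pi_eq_generateFrom (hm : ∀ y : V, MeasurableSet ({y} : Set V)) :
    (inferInstance : MeasurableSpace (ℕ → V))
      = MeasurableSpace.generateFrom (cylinders (V := V)) := by
  apply le_antisymm
  · rw [show (inferInstance : MeasurableSpace (ℕ → V)) = MeasurableSpace.pi from rfl,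
      MeasurableSpace.pi]
    refine iSup_le fun i => fun s hs => ?_
    obtain ⟨A, hA, rfl⟩ := hs
    have h1 : (fun ω : ℕ → V => ω i) ⁻¹' A = ⋃ (a : V) (_ : a ∈ A), {ω : ℕ → V | ω i = a} := by
      ext ω; simp
    rw [h1]
    refine MeasurableSet.iUnion fun a => MeasurableSet.iUnion fun _ => ?_
    rw [coord_eq_union]
    exact MeasurableSet.iUnion fun v => MeasurableSet.iUnion fun _ =>
      MeasurableSpace.measurableSet_generateFrom ⟨i, extFun i v, rfl⟩
  · refine MeasurableSpace.generateFrom_le ?_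
    rintro t ⟨n, s, rfl⟩
    exact measurable_cylSet hm n s

lemma isPiSystem_cylinders : IsPiSystem (cylinders (V := V)) := by
  have aux : ∀ {n k : ℕ} {s t : ℕ → V}, n ≤ k → (cylSet n s ∩ cylSet k t).Nonempty →
      cylSet (V := V) n s ∩ cylSet k t = cylSet k t := by
    rintro n k s t hnk ⟨ω₀, h₀s, h₀t⟩
    rw [Set.inter_eq_right]
    intro ω hω i hin
    rw [hω i (hin.trans hnk), ← h₀t i (hin.trans hnk), h₀s i hin]
  rintro S ⟨n, s, rfl⟩ T ⟨k, t, rfl⟩ hne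
  rcases le_total n k with h | h
  · rw [aux h hne]; exact ⟨k, t, rfl⟩
  · rw [Set.inter_comm] at hne ⊢
    rw [aux h hne]; exact ⟨n, s, rfl⟩

end Meas
section Sep
variable [MeasurableSpace V]

lemma sep_points (p : Matrix V V ℝ) (hnn : ∀ x y, 0 ≤ p x y)
    (hrow : ∀ x, ∑ y : V, p x y = 1)
    (P : V → Measure (ℕ → V)) (hP : IsChainLaw (fun x y => p x y) P)
    (a b : V) (hab : a ≠ b) :
    ∃ A : Set V, MeasurableSet A ∧ a ∈ A ∧ b ∉ A := by
  by_contra hc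
  push_neg at hc
  have hAB : ∀ A : Set V, MeasurableSet A → (a ∈ A ↔ b ∈ A) := by
    intro A hA
    constructor
    · exact hc A hA
    · intro hb
      by_contra ha
      exact (hc Aᶜ hA.compl ha) hb
  set σ : Equiv.Perm V := Equiv.swap a b with hσdef
  have hσ : ∀ A : Set V, MeasurableSet A → σ ⁻¹' A = A := by
    intro A hA
    ext x
    rcases eq_or_ne x a with rfl | hxa
    · simp only [Set.mem_preimage, hσdef, Equiv.swap_apply_left]
      exact (hAB A hA).symm
    rcases eq_or_ne x b with rfl | hxb
    · simp only [Set.mem_preimage, hσdef, Equiv.swap_apply_right]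
      exact hAB A hA
    · simp only [Set.mem_preimage, hσdef, Equiv.swap_apply_of_ne_of_ne hxa hxb]
  set T : (ℕ → V) → (ℕ → V) := fun ω i => if i = 0 then σ (ω 0) else ω i with hTdef
  have hTT : ∀ ω, T (T ω) = ω := by
    intro ω
    funext i
    rcases eq_or_ne i 0 with rfl | hi
    · simp only [hTdef, if_pos rfl]
      exact Equiv.swap_apply_self _ _ _
    · simp [hTdef, hi]
  have hTmeas : ∀ B : Set (ℕ → V), MeasurableSet B → T ⁻¹' B = B := by
    intro B hB
    let I : MeasurableSpace (ℕ → V) :=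
      { MeasurableSet' := fun B => T ⁻¹' B = B
        measurableSet_empty := by show T ⁻¹' ∅ = ∅; simp
        measurableSet_compl := fun s hs => by
          show T ⁻¹' sᶜ = sᶜ
          rw [Set.preimage_compl, show T ⁻¹' s = s from hs]
        measurableSet_iUnion := fun f hf => by
          show T ⁻¹' (⋃ i, f i) = ⋃ i, f i
          rw [Set.preimage_iUnion]
          exact Set.iUnion_congr hf }
    have hle : (MeasurableSpace.pi : MeasurableSpace (ℕ → V)) ≤ I := by
      rw [MeasurableSpace.pi]
      refine iSup_le fun i => fun s hs => ?_
      obtain ⟨A, hA, rfl⟩ := hs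
      show T ⁻¹' ((fun ω : ℕ → V => ω i) ⁻¹' A) = (fun ω : ℕ → V => ω i) ⁻¹' A
      rcases eq_or_ne i 0 with rfl | hi
      · have h1 : T ⁻¹' ((fun ω : ℕ → V => ω 0) ⁻¹' A)
            = (fun ω : ℕ → V => ω 0) ⁻¹' (σ ⁻¹' A) := by
          ext ω; simp [hTdef]
        rw [h1, hσ A hA]
      · ext ω
        simp [hTdef, hi]
    exact hle B hB
  have half : ∀ S : Set (ℕ → V), P a (T ⁻¹' S) ≤ P a S := by
    intro S
    rw [measure_eq_iInf S, measure_eq_iInf (T ⁻¹' S)]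
    refine le_iInf fun t => le_iInf fun hSt => le_iInf fun hmt => ?_
    refine iInf_le_of_le t (iInf_le_of_le ?_ (iInf_le _ hmt))
    rw [← hTmeas t hmt]
    exact Set.preimage_mono hSt
  have key : ∀ S : Set (ℕ → V), P a (T ⁻¹' S) = P a S := by
    intro S
    refine le_antisymm (half S) ?_
    have h2 := half (T ⁻¹' S)
    rwa [show T ⁻¹' (T ⁻¹' S) = S from by
      ext ω; rw [Set.mem_preimage, Set.mem_preimage, hTT ω]] at h2
  have hzero : ∀ y : V, p a y = 0 := by
    intro y
    classical
    set s1 : ℕ → V := fun i => if i = 0 then b else y with hs1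
    set s2 : ℕ → V := fun i => if i = 0 then a else y with hs2
    have hset : T ⁻¹' {ω | ∀ i ≤ 1, ω i = s1 i} = {ω | ∀ i ≤ 1, ω i = s2 i} := by
      ext ω
      simp only [Set.mem_preimage, Set.mem_setOf_eq]
      constructor
      · intro h i hi
        interval_cases i
        · have h0 := h 0 (by norm_num)
          simp only [hTdef, if_pos rfl, hs1] at h0
          have := congrArg σ h0
          rw [Equiv.swap_apply_self] at this
          simp only [hs2, if_pos rfl]
          rw [this, hσdef, Equiv.swap_apply_right]
        · have h1 := h 1 le_rfl
          simp only [hTdef, hs1] at h1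
          simpa [hs2] using h1
      · intro h i hi
        interval_cases i
        · have h0 := h 0 (by norm_num)
          simp only [hs2, if_pos rfl] at h0
          simp only [hTdef, if_pos rfl, hs1, h0]
          rw [hσdef, Equiv.swap_apply_left]
        · have h1 := h 1 le_rfl
          simp only [hs2] at h1
          simpa [hTdef, hs1] using h1
    have e1 : P a {ω | ∀ i ≤ 1, ω i = s1 i} = 0 := by
      rw [hP.2 a 1 s1]
      simp [hs1, Ne.symm hab]
    have e2 : P a {ω | ∀ i ≤ 1, ω i = s2 i} = ENNReal.ofReal (p a y) := by
      rw [hP.2 a 1 s2]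
      simp [hs2]
    have e3 : ENNReal.ofReal (p a y) = 0 := by
      rw [← e2, ← hset, key, e1]
    have := ENNReal.ofReal_eq_zero.mp e3
    linarith [hnn a y]
  have := hrow a
  rw [Finset.sum_congr rfl fun y _ => hzero y] at this
  simp at this

lemma meas_singleton (p : Matrix V V ℝ) (hnn : ∀ x y, 0 ≤ p x y)
    (hrow : ∀ x, ∑ y : V, p x y = 1)
    (P : V → Measure (ℕ → V)) (hP : IsChainLaw (fun x y => p x y) P) :
    ∀ y : V, MeasurableSet ({y} : Set V) := by
  intro y
  classical
  choose A hAmeas hAmem hAnot using fun (z : V) (h : z ≠ y) =>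
    sep_points p hnn hrow P hP y z (Ne.symm h)
  have h1 : ({y} : Set V) = ⋂ (z : V) (h : z ≠ y), A z h := by
    ext w
    simp only [Set.mem_singleton_iff, Set.mem_iInter]
    constructor
    · rintro rfl z h
      exact hAmem z h
    · intro h
      by_contra hw
      exact hAnot w hw (h w hw)
  rw [h1]
  exact MeasurableSet.iInter fun z => MeasurableSet.iInter fun h => hAmeas z h

end Sep
section Markov
variable [MeasurableSpace V]

lemma markov (hm : ∀ y : V, MeasurableSet ({y} : Set V)) (p : Matrix V V ℝ)
    (P : V → Measure (ℕ → V)) (hP : IsChainLaw (fun x y => p x y) P)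
    (x : V) (m : ℕ) (s : ℕ → V) :
    ((P x).restrict (cylSet m s)).map (shift m) = (P x (cylSet m s)) • (P (s m)) := by
  classical
  haveI := hP.1 x
  haveI := hP.1 (s m)
  haveI hfin1 : IsFiniteMeasure (((P x).restrict (cylSet m s)).map (shift m)) := by
    constructor
    rw [Measure.map_apply (measurable_shift m) MeasurableSet.univ]
    exact (measure_mono (Set.subset_univ _)).trans_lt (measure_lt_top _ _)
  refine ext_of_generate_finite (cylinders (V := V)) (pi_eq_generateFrom hm)
    isPiSystem_cylinders ?_ ?_
  · rintro B ⟨k, t, rfl⟩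
    rw [Measure.map_apply (measurable_shift m) (measurable_cylSet hm k t),
      Measure.restrict_apply ((measurable_shift m) (measurable_cylSet hm k t)),
      Measure.smul_apply, smul_eq_mul]
    by_cases hts : t 0 = s m
    · set g : ℕ → V := fun i => if i ≤ m then s i else t (i - m) with hgdef
      have h0 : shift m ⁻¹' cylSet k t ∩ cylSet m s = cylSet (m + k) g := by
        ext ω
        simp only [Set.mem_inter_iff, Set.mem_preimage, cylSet, Set.mem_setOf_eq, shift]
        constructor
        · rintro ⟨h1, h2⟩ i hi
          by_cases him : i ≤ m
          · rw [show g i = s i from if_pos him]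
            exact h2 i him
          · obtain ⟨j, rfl⟩ : ∃ j, i = m + j := ⟨i - m, by omega⟩
            rw [show g (m + j) = t (m + j - m) from if_neg him, Nat.add_sub_cancel_left]
            exact h1 j (by omega)
        · intro h
          constructor
          · intro j hj
            have hmj := h (m + j) (by omega)
            rcases Nat.eq_zero_or_pos j with rfl | hjpos
            · rw [show g (m + 0) = s m from by rw [hgdef]; simp] at hmj
              rw [hmj, hts]
            · rwa [show g (m + j) = t j from by
                rw [hgdef]
                simp only []
                rw [if_neg (by omega), Nat.add_sub_cancel_left]] at hmj
          · intro i him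
            have := h i (by omega)
            rwa [show g i = s i from if_pos him] at this
      rw [h0]
      have e1 := hP.2 x (m + k) g
      have e2 := hP.2 x m s
      have e3 := hP.2 (s m) k t
      rw [show cylSet (m + k) g = {ω | ∀ i ≤ m + k, ω i = g i} from rfl, e1,
        show cylSet m s = {ω | ∀ i ≤ m, ω i = s i} from rfl, e2,
        show cylSet k t = {ω | ∀ i ≤ k, ω i = t i} from rfl, e3, if_pos hts]
      beta_reduce
      have hg0 : g 0 = s 0 := if_pos (Nat.zero_le m)
      rw [hg0, Finset.prod_range_add]
      have eA : ∏ i ∈ Finset.range m, ENNReal.ofReal (p (g i) (g (i+1)))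
          = ∏ i ∈ Finset.range m, ENNReal.ofReal (p (s i) (s (i+1))) := by
        refine Finset.prod_congr rfl fun i hi => ?_
        rw [Finset.mem_range] at hi
        rw [show g i = s i from if_pos (by omega), show g (i+1) = s (i+1) from if_pos (by omega)]
      have eB : ∏ j ∈ Finset.range k, ENNReal.ofReal (p (g (m + j)) (g (m + j + 1)))
          = ∏ j ∈ Finset.range k, ENNReal.ofReal (p (t j) (t (j+1))) := by
        refine Finset.prod_congr rfl fun j hj => ?_
        have hg2 : g (m + j + 1) = t (j + 1) := by
          rw [show m + j + 1 = m + (j + 1) by omega,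
            show g (m + (j+1)) = t (m + (j+1) - m) from if_neg (by omega),
            Nat.add_sub_cancel_left]
        rcases Nat.eq_zero_or_pos j with rfl | hjpos
        · rw [show g (m + 0) = s m from by rw [hgdef]; simp, hg2, hts]
        · rw [show g (m + j) = t (m + j - m) from if_neg (by omega),
            Nat.add_sub_cancel_left, hg2]
      rw [eA, eB]
      ring
    · have h0 : shift m ⁻¹' cylSet k t ∩ cylSet m s = ∅ := by
        ext ω
        simp only [Set.mem_inter_iff, Set.mem_preimage, cylSet, Set.mem_setOf_eq, shift,
          Set.mem_empty_iff_false, iff_false]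
        rintro ⟨h1, h2⟩
        refine hts ?_
        rw [← h1 0 (Nat.zero_le k), ← h2 m le_rfl]
        rfl

      rw [h0, measure_empty, show cylSet k t = {ω | ∀ i ≤ k, ω i = t i} from rfl,
        hP.2 (s m) k t, if_neg hts, zero_mul, mul_zero]
  · rw [Measure.map_apply (measurable_shift m) MeasurableSet.univ, Set.preimage_univ,
      Measure.restrict_apply MeasurableSet.univ, Set.univ_inter, Measure.smul_apply,
      measure_univ, smul_eq_mul, mul_one]

end Markov
section Step
variable [MeasurableSpace V]

lemma step_main (hm : ∀ y : V, MeasurableSet ({y} : Set V)) (p : Matrix V V ℝ)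
    (P : V → Measure (ℕ → V)) (hP : IsChainLaw (fun x y => p x y) P)
    (x u : V) (S : Finset V) (hu : u ∈ S) :
    ∫⁻ ω, covS S ω ∂(P x) ≤ ∫⁻ ω, covS (S.erase u) ω ∂(P x)
      + tHit P * P x {ω | covS (S.erase u) ω < hitTime u ω} := by
  classical
  haveI := hP.1 x
  set S' := S.erase u with hS'
  have mC : Measurable fun ω : ℕ → V => covS S' ω := measurable_covS hm S'
  have mτ : Measurable fun ω : ℕ → V => hitTime u ω := measurable_hitTime hm u
  -- pointwise bound
  have hpt : ∀ ω : ℕ → V, covS S ω ≤ covS S' ω + (hitTime u ω - covS S' ω) := by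
    intro ω
    have h1 : covS S ω = hitTime u ω ⊔ covS S' ω := by
      rw [show S = insert u S' from (Finset.insert_erase hu).symm, covS, Finset.sup_insert]
      rfl
    rw [h1]
    exact sup_le le_add_tsub le_self_add
  have hint : ∫⁻ ω, covS S ω ∂(P x)
      ≤ ∫⁻ ω, covS S' ω ∂(P x) + ∫⁻ ω, (hitTime u ω - covS S' ω) ∂(P x) := by
    calc ∫⁻ ω, covS S ω ∂(P x)
        ≤ ∫⁻ ω, (covS S' ω + (hitTime u ω - covS S' ω)) ∂(P x) := lintegral_mono hpt
      _ = _ := lintegral_add_left mC _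
  refine hint.trans (add_le_add_right ?_ _)
  -- now bound ∫ (τ - C)
  set A : ℕ → Set (ℕ → V) := fun n =>
    {ω | covS S' ω ≤ (n : ℝ≥0∞) ∧ (∀ k < n, ¬ covS S' ω ≤ (k : ℝ≥0∞)) ∧ (n : ℝ≥0∞) < hitTime u ω}
    with hA
  have mA : ∀ n : ℕ, MeasurableSet (A n) := by
    intro n
    have h1 : A n = ((fun ω : ℕ → V => covS S' ω) ⁻¹' Set.Iic (n : ℝ≥0∞))
        ∩ ((⋂ (k : ℕ) (_ : k < n), ((fun ω : ℕ → V => covS S' ω) ⁻¹' Set.Iic (k : ℝ≥0∞))ᶜ)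
          ∩ (fun ω : ℕ → V => hitTime u ω) ⁻¹' Set.Ioi (n : ℝ≥0∞)) := by
      ext ω
      simp only [hA, Set.mem_setOf_eq, Set.mem_inter_iff, Set.mem_preimage, Set.mem_Iic,
        Set.mem_Ioi, Set.mem_iInter, Set.mem_compl_iff]
      all_goals tauto
    rw [h1]
    exact ((mC measurableSet_Iic).inter
      ((MeasurableSet.iInter fun k => MeasurableSet.iInter fun _ =>
        (mC measurableSet_Iic).compl).inter (mτ measurableSet_Ioi)))
  have hdisj : Pairwise (Function.onFun Disjoint A) := by
    intro n n' hnn'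
    show Disjoint (A n) (A n')
    rcases Nat.lt_or_ge n n' with h | h
    · rw [Set.disjoint_left]
      rintro ω ⟨h1, _, _⟩ ⟨_, h2', _⟩
      exact h2' n h h1
    · have hlt : n' < n := lt_of_le_of_ne h (Ne.symm hnn')
      rw [Set.disjoint_left]
      rintro ω ⟨_, h2, _⟩ ⟨h1', _, _⟩
      exact h2 n' hlt h1'
  have hsub : ∀ n : ℕ, A n ⊆ {ω | covS S' ω < hitTime u ω} := by
    rintro n ω ⟨h1, _, h3⟩
    exact lt_of_le_of_lt h1 h3
  have hzero : ∀ ω : ℕ → V, ω ∉ (⋃ n, A n) → hitTime u ω - covS S' ω = 0 := by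
    intro ω hω
    rcases covS_nat_or_top S' ω with hC | ⟨n₀, hC⟩
    · rw [hC]
      exact ENNReal.sub_top
    rcases le_or_gt (hitTime u ω) (covS S' ω) with hle | hlt
    · exact tsub_eq_zero_of_le hle
    exfalso
    refine hω (Set.mem_iUnion.mpr ⟨n₀, ?_, ?_, ?_⟩)
    · exact le_of_eq hC
    · intro k hk hc
      rw [hC] at hc
      exact absurd (Nat.cast_le.mp hc) (by omega)
    · rw [← hC]; exact hlt
  -- membership in A n depends only on coordinates ≤ n
  have hcongr : ∀ n : ℕ, ∀ ω ω' : ℕ → V, (∀ i ≤ n, ω i = ω' i) → (ω ∈ A n ↔ ω' ∈ A n) := by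
    intro n ω ω' hagree
    have hCle : ∀ k : ℕ, k ≤ n → (covS S' ω ≤ (k : ℝ≥0∞) ↔ covS S' ω' ≤ (k : ℝ≥0∞)) := by
      intro k hk
      rw [covS_le_iff, covS_le_iff]
      constructor <;> intro h y hy <;> obtain ⟨i, hik, hiy⟩ := h y hy
      · exact ⟨i, hik, by rw [← hagree i (hik.trans hk)]; exact hiy⟩
      · exact ⟨i, hik, by rw [hagree i (hik.trans hk)]; exact hiy⟩
    have hτn : ((n : ℝ≥0∞) < hitTime u ω ↔ (n : ℝ≥0∞) < hitTime u ω') := by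
      rw [lt_hitTime_iff, lt_hitTime_iff]
      constructor <;> intro h i hi
      · rw [← hagree i hi]; exact h i hi
      · rw [hagree i hi]; exact h i hi
    simp only [hA, Set.mem_setOf_eq]
    constructor <;> rintro ⟨h1, h2, h3⟩
    · exact ⟨(hCle n le_rfl).mp h1, fun k hk hc => h2 k hk ((hCle k hk.le).mpr hc), hτn.mp h3⟩
    · exact ⟨(hCle n le_rfl).mpr h1, fun k hk hc => h2 k hk ((hCle k hk.le).mp hc), hτn.mpr h3⟩
  have hdecomp : ∀ n : ℕ, A n
      = ⋃ v ∈ Finset.univ.filter (fun v : Fin (n+1) → V => extFun n v ∈ A n),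
          cylSet n (extFun n v) := by
    intro n
    ext ω
    simp only [Set.mem_iUnion, Finset.mem_filter, Finset.mem_univ, true_and]
    constructor
    · intro hω
      refine ⟨fun i => ω i, ?_, ?_⟩
      · exact (hcongr n ω (extFun n (fun i => ω i)) (fun i hi => by rw [extFun_eq hi])).mp hω
      · intro i hi
        rw [extFun_eq hi]
    · rintro ⟨v, hv, hc⟩
      exact (hcongr n (extFun n v) ω (fun i hi => (hc i hi).symm)).mp hv
  have hcylpd : ∀ n : ℕ, Set.PairwiseDisjoint
      (↑(Finset.univ.filter (fun v : Fin (n+1) → V => extFun n v ∈ A n)))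
      (fun v : Fin (n+1) → V => cylSet n (extFun n v)) := by
    intro n
    intro v _ w _ hvw
    rw [Function.onFun, Set.disjoint_left]
    intro ω hωv hωw
    refine hvw (funext fun i => ?_)
    have h1 := hωv i.1 (Nat.lt_succ_iff.mp i.isLt)
    have h2 := hωw i.1 (Nat.lt_succ_iff.mp i.isLt)
    rw [extFun_eq (Nat.lt_succ_iff.mp i.isLt)] at h1 h2
    rw [show (⟨i.1, i.isLt⟩ : Fin (n+1)) = i from Fin.ext rfl] at h1 h2
    rw [← h1, ← h2]
  -- per-cylinder bound
  have hkey : ∀ n : ℕ, ∀ v : Fin (n+1) → V, extFun n v ∈ A n →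
      ∫⁻ ω in cylSet n (extFun n v), (hitTime u ω - covS S' ω) ∂(P x)
        ≤ tHit P * P x (cylSet n (extFun n v)) := by
    intro n v hv
    have hptc : ∀ ω ∈ cylSet n (extFun n v),
        hitTime u ω - covS S' ω = hitTime u (shift n ω) := by
      intro ω hω
      have hωA : ω ∈ A n := (hcongr n (extFun n v) ω (fun i hi => (hω i hi).symm)).mp hv
      obtain ⟨h1, h2, h3⟩ := hωA
      have hCn : covS S' ω = (n : ℝ≥0∞) := by
        rcases covS_nat_or_top S' ω with hC | ⟨n₀, hC⟩
        · rw [hC] at h1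
          exact absurd h1 (by simp)
        · have hn₀ : n₀ ≤ n := Nat.cast_le.mp (hC ▸ h1)
          have hge : n ≤ n₀ := by
            by_contra hlt
            exact h2 n₀ (by omega) (le_of_eq hC)
          rw [hC]
          exact Nat.cast_inj.mpr (le_antisymm hn₀ hge)
      have hnu : ∀ i ≤ n, ω i ≠ u := lt_hitTime_iff.mp h3
      rw [hCn, hitTime_shift hnu]
      exact ENNReal.add_sub_cancel_left (ENNReal.natCast_ne_top n)
    rw [setLIntegral_congr_fun (measurable_cylSet hm n (extFun n v))
      hptc]
    have hmap : ∫⁻ ω in cylSet n (extFun n v), hitTime u (shift n ω) ∂(P x)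
        = ∫⁻ ω', hitTime u ω' ∂(((P x).restrict (cylSet n (extFun n v))).map (shift n)) :=
      (lintegral_map (measurable_hitTime hm u) (measurable_shift n)).symm
    rw [hmap, markov hm p P hP x n (extFun n v), lintegral_smul_measure]
    have hext : extFun n v n = v ⟨n, Nat.lt_succ_self n⟩ := extFun_eq le_rfl
    have hbound : ∫⁻ ω', hitTime u ω' ∂(P (extFun n v n)) ≤ tHit P := by
      calc ∫⁻ ω', hitTime u ω' ∂(P (extFun n v n)) = eHit P (extFun n v n) u := rfl
        _ ≤ ⨆ y, eHit P (extFun n v n) y := le_iSup _ u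
        _ ≤ tHit P := le_iSup (fun z => ⨆ y, eHit P z y) (extFun n v n)
    calc P x (cylSet n (extFun n v)) * ∫⁻ ω', hitTime u ω' ∂(P (extFun n v n))
        ≤ P x (cylSet n (extFun n v)) * tHit P := mul_le_mul_right hbound _
      _ = tHit P * P x (cylSet n (extFun n v)) := mul_comm _ _
  -- per-A n bound
  have hAn : ∀ n : ℕ, ∫⁻ ω in A n, (hitTime u ω - covS S' ω) ∂(P x) ≤ tHit P * P x (A n) := by
    intro n
    rw [hdecomp n,
      lintegral_biUnion_finset (hcylpd n) (fun v _ => measurable_cylSet hm n (extFun n v)),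
      measure_biUnion_finset (hcylpd n) (fun v _ => measurable_cylSet hm n (extFun n v)),
      Finset.mul_sum]
    refine Finset.sum_le_sum fun v hv => ?_
    rw [Finset.mem_filter] at hv
    exact hkey n v hv.2
  -- assemble
  have hU : MeasurableSet (⋃ n, A n) := MeasurableSet.iUnion mA
  have htot : ∫⁻ ω, (hitTime u ω - covS S' ω) ∂(P x)
      = ∫⁻ ω in (⋃ n, A n), (hitTime u ω - covS S' ω) ∂(P x) := by
    rw [← lintegral_add_compl (fun ω => hitTime u ω - covS S' ω) hU]
    have hz : ∫⁻ ω in (⋃ n, A n)ᶜ, (hitTime u ω - covS S' ω) ∂(P x) = 0 := by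
      rw [setLIntegral_congr_fun hU.compl
        fun ω hω => hzero ω hω]
      simp
    rw [hz, add_zero]
  rw [htot, lintegral_iUnion mA hdisj]
  calc ∑' n, ∫⁻ ω in A n, (hitTime u ω - covS S' ω) ∂(P x)
      ≤ ∑' n, tHit P * P x (A n) := ENNReal.tsum_le_tsum hAn
    _ = tHit P * ∑' n, P x (A n) := ENNReal.tsum_mul_left
    _ = tHit P * P x (⋃ n, A n) := by rw [measure_iUnion hdisj mA]
    _ ≤ tHit P * P x {ω | covS S' ω < hitTime u ω} :=
        mul_le_mul_right (measure_mono (Set.iUnion_subset hsub)) _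

end Step
section Induct
variable [MeasurableSpace V]

lemma sum_events_le_one (hm : ∀ y : V, MeasurableSet ({y} : Set V))
    (P : V → Measure (ℕ → V)) (x : V) (hprob : IsProbabilityMeasure (P x)) (S : Finset V) :
    ∑ u ∈ S, P x {ω | covS (S.erase u) ω < hitTime u ω} ≤ 1 := by
  classical
  haveI := hprob
  have mE : ∀ u ∈ S, MeasurableSet {ω : ℕ → V | covS (S.erase u) ω < hitTime u ω} :=
    fun u _ => measurableSet_lt (measurable_covS hm _) (measurable_hitTime hm u)
  have hdisj : Set.PairwiseDisjoint (↑S)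
      (fun u => {ω : ℕ → V | covS (S.erase u) ω < hitTime u ω}) := by
    intro u hu w hw huw
    rw [Function.onFun, Set.disjoint_left]
    intro ω h1 h2
    simp only [Set.mem_setOf_eq] at h1 h2
    rw [Finset.mem_coe] at hu hw
    have e1 : hitTime w ω ≤ covS (S.erase u) ω :=
      Finset.le_sup (f := fun y => hitTime y ω) (Finset.mem_erase.mpr ⟨Ne.symm huw, hw⟩)
    have e2 : hitTime u ω ≤ covS (S.erase w) ω :=
      Finset.le_sup (f := fun y => hitTime y ω) (Finset.mem_erase.mpr ⟨huw, hu⟩)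
    exact absurd (e2.trans_lt h2) (lt_asymm (e1.trans_lt h1))
  calc ∑ u ∈ S, P x {ω | covS (S.erase u) ω < hitTime u ω}
      = P x (⋃ u ∈ S, {ω | covS (S.erase u) ω < hitTime u ω}) :=
        (measure_biUnion_finset hdisj mE).symm
    _ ≤ 1 := prob_le_one
  
lemma matthews_induction (hm : ∀ y : V, MeasurableSet ({y} : Set V)) (p : Matrix V V ℝ)
    (P : V → Measure (ℕ → V)) (hP : IsChainLaw (fun x y => p x y) P) :
    ∀ (k : ℕ) (S : Finset V), S.card = k → ∀ x : V,
      ∫⁻ ω, covS S ω ∂(P x) ≤ (∑ j ∈ Finset.range k, ((j : ℝ≥0∞) + 1)⁻¹) * tHit P := by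
  intro k
  induction k with
  | zero =>
    intro S hS x
    rw [Finset.card_eq_zero.mp hS]
    have h0 : (fun ω : ℕ → V => covS ∅ ω) = fun _ => (0 : ℝ≥0∞) := by
      funext ω; rw [covS, Finset.sup_empty]; rfl
    rw [h0]
    simp
  | succ k ih =>
    intro S hS x
    haveI := hP.1 x
    have hstep : ∀ u ∈ S, ∫⁻ ω, covS S ω ∂(P x)
        ≤ (∑ j ∈ Finset.range k, ((j : ℝ≥0∞) + 1)⁻¹) * tHit P
          + tHit P * P x {ω | covS (S.erase u) ω < hitTime u ω} := fun u hu =>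
      (step_main hm p P hP x u S hu).trans
        (add_le_add_left (ih (S.erase u) (by rw [Finset.card_erase_of_mem hu, hS]; rfl) x) _)
    have hsum : ((k+1 : ℕ) : ℝ≥0∞) * ∫⁻ ω, covS S ω ∂(P x)
        ≤ ((k+1 : ℕ) : ℝ≥0∞) * ((∑ j ∈ Finset.range k, ((j : ℝ≥0∞) + 1)⁻¹) * tHit P)
          + tHit P := by
      calc ((k+1 : ℕ) : ℝ≥0∞) * ∫⁻ ω, covS S ω ∂(P x)
          = ∑ _u ∈ S, ∫⁻ ω, covS S ω ∂(P x) := by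
            rw [Finset.sum_const, nsmul_eq_mul, hS]
        _ ≤ ∑ u ∈ S, ((∑ j ∈ Finset.range k, ((j : ℝ≥0∞) + 1)⁻¹) * tHit P
            + tHit P * P x {ω | covS (S.erase u) ω < hitTime u ω}) := Finset.sum_le_sum hstep
        _ = ((k+1 : ℕ) : ℝ≥0∞) * ((∑ j ∈ Finset.range k, ((j : ℝ≥0∞) + 1)⁻¹) * tHit P)
            + tHit P * ∑ u ∈ S, P x {ω | covS (S.erase u) ω < hitTime u ω} := by
            rw [Finset.sum_add_distrib, Finset.sum_const, nsmul_eq_mul, hS, Finset.mul_sum]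
        _ ≤ ((k+1 : ℕ) : ℝ≥0∞) * ((∑ j ∈ Finset.range k, ((j : ℝ≥0∞) + 1)⁻¹) * tHit P)
            + tHit P * 1 :=
            add_le_add_right (mul_le_mul_right (sum_events_le_one hm P x (hP.1 x) S) _) _
        _ = _ := by rw [mul_one]
    have hk1 : ((k+1 : ℕ) : ℝ≥0∞) ≠ 0 := Nat.cast_ne_zero.mpr (Nat.succ_ne_zero k)
    have hk2 : ((k+1 : ℕ) : ℝ≥0∞) ≠ ⊤ := ENNReal.natCast_ne_top _
    rw [← ENNReal.mul_le_mul_iff_right hk1 hk2]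
    refine hsum.trans (le_of_eq ?_)
    rw [Finset.sum_range_succ, add_mul, mul_add]
    congr 1
    rw [← mul_assoc, show ((k+1 : ℕ) : ℝ≥0∞) = (k : ℝ≥0∞) + 1 from by push_cast; rfl,
      ENNReal.mul_inv_cancel (by simp) (ENNReal.add_ne_top.mpr
        ⟨ENNReal.natCast_ne_top k, ENNReal.one_ne_top⟩), one_mul]

end Induct
end MatthewsAux

open MeasureTheory ENNReal Filter ProbabilityTheory
/-- Matthews bound -/
theorem statement1 {V : Type*} [Fintype V] [DecidableEq V] [MeasurableSpace V] [Nonempty V]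
    (p : Matrix V V ℝ)
    (hnn : ∀ x y, 0 ≤ p x y) (hrow : ∀ x, ∑ y : V, p x y = 1)
    (hirr : ∀ x y : V, ∃ n : ℕ, 0 < (p ^ n) x y)
    (P : V → Measure (ℕ → V))
    (hP : IsChainLaw (fun x y => p x y) P) :
    tCov P ≤ ENNReal.ofReal (Real.log (Fintype.card V) + 1) * tHit P := by
  classical
  have hm := MatthewsAux.meas_singleton p hnn hrow P hP
  set n := Fintype.card V with hn
  have hind := MatthewsAux.matthews_induction hm p P hP n Finset.univ (by rw [Finset.card_univ])
  have hcov : tCov P ≤ (∑ j ∈ Finset.range n, ((j : ℝ≥0∞) + 1)⁻¹) * tHit P := by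
    rw [tCov]
    refine iSup_le fun x => ?_
    have h1 : ∫⁻ ω, covTime ω ∂(P x) = ∫⁻ ω, MatthewsAux.covS Finset.univ ω ∂(P x) :=
      lintegral_congr fun ω => MatthewsAux.covTime_eq_covS ω
    rw [h1]
    exact hind x
  refine hcov.trans (mul_le_mul_left ?_ _)
  have h1 : (∑ j ∈ Finset.range n, ((j : ℝ≥0∞) + 1)⁻¹)
      = ENNReal.ofReal (∑ j ∈ Finset.range n, ((j : ℝ) + 1)⁻¹) := by
    rw [ENNReal.ofReal_sum_of_nonneg (fun j _ => by positivity)]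
    refine Finset.sum_congr rfl fun j _ => ?_
    rw [ENNReal.ofReal_inv_of_pos (by positivity),
      ENNReal.ofReal_add (by positivity) (by norm_num), ENNReal.ofReal_natCast,
      ENNReal.ofReal_one]
  rw [h1]
  refine ENNReal.ofReal_le_ofReal ?_
  have h2 : (∑ j ∈ Finset.range n, ((j : ℝ) + 1)⁻¹) = ((harmonic n : ℚ) : ℝ) := by
    rw [harmonic]
    push_cast
    rfl
  rw [h2]
  have := harmonic_le_one_add_log n
  linarith
end

section
/- (Commute time identity) For a finite connected weighted graph G with total weight μ(G) = Σ_{x,y} μ_{xy}, for all vertices x, y: E^x(τ_y) + E^y(τ_x) = μ(G) · R_eff(x, y), where R_eff is the effective resistance. -/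
open Finset MeasureTheory ENNReal Filter
open scoped Classical ENNReal
noncomputable section

namespace CTI

variable {V : Type*} [Fintype V]

/-- survival probabilities: probability to avoid `y` for `n` steps starting at `z`. -/
noncomputable def srv (p : V → V → ℝ) (y : V) (n : ℕ) : V → ℝ :=
  Nat.rec (fun z => if z = y then 0 else 1)
    (fun _ prev z => if z = y then 0 else ∑ w, p z w * prev w) n

@[simp] lemma srv_zero {p : V → V → ℝ} {y z : V} :
    srv p y 0 z = if z = y then 0 else 1 := rfl

@[simp] lemma srv_succ {p : V → V → ℝ} {y z : V} {n : ℕ} :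
    srv p y (n+1) z = if z = y then 0 else ∑ w, p z w * srv p y n w := rfl

variable {p : V → V → ℝ} {y : V}

lemma srv_y (n : ℕ) : srv p y n y = 0 := by cases n <;> simp

lemma srv_nonneg (hp : ∀ z w, 0 ≤ p z w) (n : ℕ) (z : V) : 0 ≤ srv p y n z := by
  induction n generalizing z with
  | zero => by_cases h : z = y <;> simp [srv_zero, srv_succ, h]
  | succ n ih =>
      by_cases h : z = y <;> simp only [srv_zero, srv_succ, h, if_true, if_false, le_refl]
      exact Finset.sum_nonneg fun w _ => mul_nonneg (hp z w) (ih w)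

lemma srv_le_one (hp : ∀ z w, 0 ≤ p z w) (hrow : ∀ z, ∑ w, p z w = 1)
    (n : ℕ) (z : V) : srv p y n z ≤ 1 := by
  induction n generalizing z with
  | zero => by_cases h : z = y <;> simp [srv_zero, srv_succ, h]
  | succ n ih =>
      by_cases h : z = y
      · simp [srv_zero, srv_succ, h]
      · simp only [srv_zero, srv_succ, h, if_false]
        calc ∑ w, p z w * srv p y n w ≤ ∑ w, p z w :=
              Finset.sum_le_sum fun w _ => mul_le_of_le_one_right (hp z w) (ih w)
          _ = 1 := hrow z

lemma srv_succ_le (hp : ∀ z w, 0 ≤ p z w) (hrow : ∀ z, ∑ w, p z w = 1)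
    (n : ℕ) (z : V) : srv p y (n+1) z ≤ srv p y n z := by
  induction n generalizing z with
  | zero =>
      by_cases h : z = y
      · simp [srv_zero, srv_succ, h]
      · simp only [srv_zero, srv_succ, h, if_false]
        calc ∑ w, p z w * srv p y 0 w ≤ ∑ w, p z w :=
              Finset.sum_le_sum fun w _ =>
                mul_le_of_le_one_right (hp z w) (srv_le_one hp hrow 0 w)
          _ = 1 := hrow z
  | succ n ih =>
      by_cases h : z = y
      · simp [srv_zero, srv_succ, h]
      · simp only [srv_zero, srv_succ, h, if_false]
        exact Finset.sum_le_sum fun w _ =>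
          mul_le_mul_of_nonneg_left (ih w) (hp z w)

lemma srv_anti (hp : ∀ z w, 0 ≤ p z w) (hrow : ∀ z, ∑ w, p z w = 1) (z : V) :
    Antitone (fun n => srv p y n z) :=
  antitone_nat_of_succ_le fun n => srv_succ_le hp hrow n z


lemma srv_le_of_le (hp : ∀ z w, 0 ≤ p z w) (hrow : ∀ z, ∑ w, p z w = 1) {m n : ℕ}
    (h : m ≤ n) (z : V) : srv p y n z ≤ srv p y m z :=
  srv_anti hp hrow z h

/-- submultiplicativity -/
lemma srv_add_le (hp : ∀ z w, 0 ≤ p z w) {k : ℕ} {c : ℝ} (hc0 : 0 ≤ c)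
    (hc : ∀ w, srv p y k w ≤ c) (n : ℕ) (z : V) :
    srv p y (n + k) z ≤ c * srv p y n z := by
  induction n generalizing z with
  | zero =>
      by_cases h : z = y
      · simp [h, srv_y]
      · simpa [h] using hc z
  | succ n ih =>
      have : n + 1 + k = (n + k) + 1 := by omega
      rw [this]
      by_cases h : z = y
      · simp [h]
      · simp only [srv_succ, h, if_false, Finset.mul_sum]
        exact Finset.sum_le_sum fun w _ => by
          have := mul_le_mul_of_nonneg_left (ih w) (hp z w)
          nlinarith [hp z w]

lemma srv_pow_le (hp : ∀ z w, 0 ≤ p z w) (hrow : ∀ z, ∑ w, p z w = 1)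
    {k : ℕ} {c : ℝ} (hc0 : 0 ≤ c) (hc : ∀ w, srv p y k w ≤ c) (j : ℕ) (z : V) :
    srv p y (j * k) z ≤ c ^ j := by
  induction j generalizing z with
  | zero => simpa using srv_le_one hp hrow 0 z
  | succ j ih =>
      have : (j + 1) * k = j * k + k := by ring
      rw [this]
      calc srv p y (j * k + k) z ≤ c * srv p y (j * k) z := srv_add_le hp hc0 hc _ z
        _ ≤ c * c ^ j := by
            exact mul_le_mul_of_nonneg_left (ih z) hc0
        _ = c ^ (j + 1) := by ring

lemma srv_summable (hp : ∀ z w, 0 ≤ p z w) (hrow : ∀ z, ∑ w, p z w = 1)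
    {k : ℕ} (hk : 0 < k) {c : ℝ} (hc0 : 0 ≤ c) (hc1 : c < 1)
    (hc : ∀ w, srv p y k w ≤ c) (z : V) :
    Summable (fun n => srv p y n z) := by
  apply summable_of_sum_range_le (c := k * (1 - c)⁻¹) (fun n => srv_nonneg hp n z)
  intro K
  have hone : (1 - c)⁻¹ = ∑' j : ℕ, c ^ j := (tsum_geometric_of_lt_one hc0 hc1).symm
  calc ∑ i ∈ Finset.range K, srv p y i z
      ≤ ∑ i ∈ Finset.range (k * K), srv p y i z := by
        apply Finset.sum_le_sum_of_subset_of_nonneg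
        · exact Finset.range_subset_range.2 (Nat.le_mul_of_pos_left K hk)
        · intro i _ _; exact srv_nonneg hp i z
    _ = ∑ j ∈ Finset.range K, ∑ r ∈ Finset.range k, srv p y (j * k + r) z := by
        induction K with
        | zero => simp
        | succ K ihK =>
            rw [Nat.mul_succ, Finset.sum_range_add, ihK, Finset.sum_range_succ]
            congr 1; apply Finset.sum_congr rfl; intro r _; rw [Nat.mul_comm K k]
    _ ≤ ∑ j ∈ Finset.range K, ∑ _r ∈ Finset.range k, c ^ j := by
        apply Finset.sum_le_sum; intro j _; apply Finset.sum_le_sum; intro r _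
        calc srv p y (j * k + r) z ≤ srv p y (j * k) z :=
              srv_le_of_le hp hrow (Nat.le_add_right _ _) z
          _ ≤ c ^ j := srv_pow_le hp hrow hc0 hc j z
    _ = k * ∑ j ∈ Finset.range K, c ^ j := by
        rw [Finset.mul_sum]
        apply Finset.sum_congr rfl; intro j _
        rw [Finset.sum_const]; simp [mul_comm]
    _ ≤ k * (1 - c)⁻¹ := by
        rw [hone]
        apply mul_le_mul_of_nonneg_left _ (by positivity)
        exact Summable.sum_le_tsum _ (fun j _ => pow_nonneg hc0 j)
          (summable_geometric_of_lt_one hc0 hc1)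


lemma srv_walk_lt_one {G : SimpleGraph V} (hGp : ∀ z w, G.Adj z w → 0 < p z w)
    (hp : ∀ z w, 0 ≤ p z w) (hrow : ∀ z, ∑ w, p z w = 1)
    {z : V} (w : G.Walk z y) : srv p y w.length z < 1 := by
  induction w with
  | nil => simp [srv_y]
  | @cons a b c hab q ih =>
      by_cases h : a = c
      · subst h; simp [SimpleGraph.Walk.length_cons, srv_y]
      · rw [SimpleGraph.Walk.length_cons]
        rw [srv_succ, if_neg h]
        calc ∑ w, p a w * srv p c q.length w < ∑ w, p a w := by
              apply Finset.sum_lt_sum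
              · intro i _
                exact mul_le_of_le_one_right (hp a i) (srv_le_one hp hrow _ i)
              · exact ⟨b, Finset.mem_univ b, by nlinarith [hGp a b hab, ih]⟩
          _ = 1 := hrow a

lemma exists_srv_bound {G : SimpleGraph V} (hGconn : G.Connected)
    (hGp : ∀ z w, G.Adj z w → 0 < p z w)
    (hp : ∀ z w, 0 ≤ p z w) (hrow : ∀ z, ∑ w, p z w = 1) :
    ∃ (k : ℕ) (c : ℝ), 0 < k ∧ 0 ≤ c ∧ c < 1 ∧ ∀ z, srv p y k z ≤ c := by
  have h1 : ∀ z : V, ∃ n, srv p y n z < 1 := by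
    intro z
    obtain ⟨w⟩ := hGconn.preconnected z y
    exact ⟨w.length, srv_walk_lt_one hGp hp hrow w⟩
  choose f hf using h1
  set k := (Finset.univ.sup f) + 1 with hk
  have hky : ∀ z, srv p y k z < 1 := fun z =>
    lt_of_le_of_lt (srv_le_of_le hp hrow
      (le_trans (Finset.le_sup (Finset.mem_univ z)) (Nat.le_succ _)) z) (hf z)
  refine ⟨k, Finset.univ.sup' ⟨y, Finset.mem_univ y⟩ (srv p y k), Nat.succ_pos _, ?_, ?_, ?_⟩
  · exact le_trans (le_of_eq (srv_y k).symm) (Finset.le_sup' _ (Finset.mem_univ y))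
  · exact (Finset.sup'_lt_iff _).2 fun z _ => hky z
  · exact fun z => Finset.le_sup' _ (Finset.mem_univ z)

lemma srv_tsum_eq (hp : ∀ z w, 0 ≤ p z w)
    (hsum : ∀ w : V, Summable (fun n => srv p y n w)) {z : V} (hz : z ≠ y) :
    ∑' n, srv p y n z = 1 + ∑ w, p z w * ∑' n, srv p y n w := by
  rw [Summable.tsum_eq_zero_add (hsum z)]
  congr 1
  · simp [hz]
  · calc ∑' n, srv p y (n+1) z = ∑' n, ∑ w, p z w * srv p y n w := by
          apply tsum_congr; intro n; rw [srv_succ, if_neg hz]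
      _ = ∑ w, ∑' n, p z w * srv p y n w :=
          Summable.tsum_finsetSum fun w _ => (hsum w).mul_left _
      _ = ∑ w, p z w * ∑' n, srv p y n w := by
          apply Finset.sum_congr rfl; intro w _; exact tsum_mul_left


/-- product of transition weights along a finite path -/
def pathP (p : V → V → ℝ) (n : ℕ) (s : Fin (n+1) → V) : ℝ :=
  ∏ i : Fin n, p (s i.castSucc) (s i.succ)

lemma pathP_nonneg (hp : ∀ z w, 0 ≤ p z w) (n : ℕ) (s : Fin (n+1) → V) :
    0 ≤ pathP p n s :=
  Finset.prod_nonneg fun i _ => hp _ _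

lemma pathP_cons (n : ℕ) (z : V) (t : Fin (n+1) → V) :
    pathP p (n+1) (Fin.cons z t) = p z (t 0) * pathP p n t := by
  simp only [pathP, Fin.prod_univ_succ, ← Fin.succ_castSucc, Fin.cons_succ,
    Fin.castSucc_zero, Fin.cons_zero]

lemma sum_cons (F : (Fin (n+2) → V) → ℝ) :
    ∑ s : Fin (n+2) → V, F s = ∑ z : V, ∑ t : Fin (n+1) → V, F (Fin.cons z t) := by
  rw [← Fintype.sum_equiv (Fin.consEquiv fun _ => V)
    (fun zt => F (Fin.cons zt.1 zt.2)) F (fun zt => by cases zt; rfl)]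
  exact Fintype.sum_prod_type _

lemma sum_pathP (hrow : ∀ z, ∑ w, p z w = 1) :
    ∀ (n : ℕ) (z : V),
      ∑ s : Fin (n+1) → V, (if s 0 = z then pathP p n s else 0) = 1 := by
  intro n
  induction n with
  | zero =>
      intro z
      have h1 : ∀ s : Fin 1 → V, (if s 0 = z then pathP p 0 s else 0)
          = if s 0 = z then 1 else 0 := by
        intro s; simp [pathP]
      simp_rw [h1]
      rw [Fintype.sum_equiv (Equiv.funUnique (Fin 1) V)
        (fun s => if s 0 = z then (1:ℝ) else 0) (fun v => if v = z then (1:ℝ) else 0)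
        (fun s => rfl)]
      simp
  | succ n ih =>
      intro z
      rw [sum_cons]
      calc ∑ z' : V, ∑ t : Fin (n+1) → V,
            (if (Fin.cons z' t : Fin (n+2) → V) 0 = z then pathP p (n+1) (Fin.cons z' t) else 0)
          = ∑ z' : V, (if z' = z then ∑ t : Fin (n+1) → V, p z' (t 0) * pathP p n t else 0) := by
            apply Finset.sum_congr rfl; intro z' _
            by_cases h : z' = z <;>
              simp [h, Fin.cons_zero, pathP_cons, Finset.sum_ite_eq]
        _ = ∑ t : Fin (n+1) → V, p z (t 0) * pathP p n t := by
            rw [Finset.sum_ite_eq' Finset.univ z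
              (fun z' => ∑ t : Fin (n+1) → V, p z' (t 0) * pathP p n t)]
            simp
        _ = ∑ t : Fin (n+1) → V, ∑ u : V,
              (if t 0 = u then p z u * pathP p n t else 0) := by
            apply Finset.sum_congr rfl; intro t _
            rw [Finset.sum_ite_eq Finset.univ (t 0)
              (fun u => p z u * pathP p n t)]
            simp
        _ = ∑ u : V, p z u * ∑ t : Fin (n+1) → V,
              (if t 0 = u then pathP p n t else 0) := by
            rw [Finset.sum_comm]
            apply Finset.sum_congr rfl; intro u _
            rw [Finset.mul_sum]
            apply Finset.sum_congr rfl; intro t _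
            by_cases h : t 0 = u <;> simp [h]
        _ = ∑ u : V, p z u := by
            apply Finset.sum_congr rfl; intro u _
            rw [ih u, mul_one]
        _ = 1 := hrow z


lemma sum_pathP_avoid (hrow : ∀ z, ∑ w, p z w = 1) :
    ∀ (n : ℕ) (z : V),
      ∑ s : Fin (n+1) → V,
        (if s 0 = z ∧ ∀ i, s i ≠ y then pathP p n s else 0) = srv p y n z := by
  intro n
  induction n with
  | zero =>
      intro z
      have h1 : ∀ s : Fin 1 → V, (if s 0 = z ∧ ∀ i, s i ≠ y then pathP p 0 s else 0)
          = if s 0 = z ∧ s 0 ≠ y then 1 else 0 := by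
        intro s
        have : (∀ i : Fin 1, s i ≠ y) ↔ s 0 ≠ y := by
          constructor
          · intro h; exact h 0
          · intro h i; rw [Fin.eq_zero i]; exact h
        simp [pathP, this]
      simp_rw [h1]
      rw [Fintype.sum_equiv (Equiv.funUnique (Fin 1) V)
        (fun s : Fin 1 → V => if s 0 = z ∧ s 0 ≠ y then (1:ℝ) else 0)
        (fun v => if v = z ∧ v ≠ y then (1:ℝ) else 0)
        (fun s => rfl)]
      by_cases h : z = y
      · subst h
        rw [Finset.sum_eq_zero]
        · simp
        · intro v _; simp only [ite_eq_right_iff]; rintro ⟨rfl, hv⟩; exact absurd rfl hv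
      · rw [srv_zero, if_neg h, Finset.sum_eq_single z]
        · simp [h]
        · intro v _ hv; simp [hv]
        · intro hz; exact absurd (Finset.mem_univ z) hz
  | succ n ih =>
      intro z
      rw [sum_cons]
      have key : ∀ (z' : V) (t : Fin (n+1) → V),
          ((Fin.cons z' t : Fin (n+2) → V) 0 = z ∧ ∀ i, (Fin.cons z' t : Fin (n+2) → V) i ≠ y)
          ↔ (z' = z ∧ z' ≠ y ∧ ∀ i, t i ≠ y) := by
        intro z' t
        rw [Fin.cons_zero]
        constructor
        · rintro ⟨rfl, h⟩
          refine ⟨rfl, by simpa using h 0, fun i => by simpa using h i.succ⟩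
        · rintro ⟨rfl, hy, h⟩
          refine ⟨rfl, fun i => ?_⟩
          rcases Fin.eq_zero_or_eq_succ i with rfl | ⟨j, rfl⟩
          · simpa using hy
          · simpa using h j
      by_cases hz : z = y
      · subst hz
        rw [srv_y, Finset.sum_eq_zero]
        intro z' _
        rw [Finset.sum_eq_zero]
        intro t _
        rw [if_neg]
        rw [key]
        rintro ⟨rfl, hy, -⟩; exact absurd rfl hy
      · calc ∑ z' : V, ∑ t : Fin (n+1) → V,
              (if (Fin.cons z' t : Fin (n+2) → V) 0 = z ∧ (∀ i, (Fin.cons z' t : Fin (n+2) → V) i ≠ y)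
                then pathP p (n+1) (Fin.cons z' t) else 0)
            = ∑ z' : V, (if z' = z then
                ∑ t : Fin (n+1) → V, (if ∀ i, t i ≠ y then p z' (t 0) * pathP p n t else 0) else 0) := by
              apply Finset.sum_congr rfl; intro z' _
              by_cases h : z' = z
              · subst h
                rw [if_pos rfl]
                apply Finset.sum_congr rfl; intro t _
                rw [pathP_cons]
                by_cases ht : ∀ i, t i ≠ y
                · rw [if_pos ((key z' t).2 ⟨rfl, hz, ht⟩), if_pos ht]
                · rw [if_neg, if_neg ht]
                  rw [key]; rintro ⟨-, -, h⟩; exact ht h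
              · rw [if_neg h, Finset.sum_eq_zero]
                intro t _
                rw [if_neg]
                rw [key]; rintro ⟨rfl, -, -⟩; exact h rfl
          _ = ∑ t : Fin (n+1) → V, (if ∀ i, t i ≠ y then p z (t 0) * pathP p n t else 0) := by
              rw [Finset.sum_ite_eq' Finset.univ z]; simp
          _ = ∑ t : Fin (n+1) → V, ∑ u : V,
                (if t 0 = u then (if ∀ i, t i ≠ y then p z u * pathP p n t else 0) else 0) := by
              apply Finset.sum_congr rfl; intro t _
              rw [Finset.sum_ite_eq Finset.univ (t 0)]; simp
          _ = ∑ u : V, p z u * ∑ t : Fin (n+1) → V,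
                (if t 0 = u ∧ ∀ i, t i ≠ y then pathP p n t else 0) := by
              rw [Finset.sum_comm]
              apply Finset.sum_congr rfl; intro u _
              rw [Finset.mul_sum]
              apply Finset.sum_congr rfl; intro t _
              by_cases h1 : t 0 = u <;> by_cases h2 : ∀ i, t i ≠ y <;>
                simp [h1, h2]
          _ = ∑ u : V, p z u * srv p y n u := by
              apply Finset.sum_congr rfl; intro u _
              rw [ih u]
          _ = srv p y (n+1) z := by rw [srv_succ, if_neg hz]


lemma ofReal_prod_of_nonneg {ι : Type*} (s : Finset ι) (f : ι → ℝ)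
    (hf : ∀ i ∈ s, 0 ≤ f i) :
    ENNReal.ofReal (∏ i ∈ s, f i) = ∏ i ∈ s, ENNReal.ofReal (f i) := by
  induction s using Finset.cons_induction with
  | empty => simp
  | cons a s ha ih =>
      rw [Finset.prod_cons, Finset.prod_cons,
        ENNReal.ofReal_mul (hf a (Finset.mem_cons_self a s)),
        ih (fun i hi => hf i (Finset.mem_cons_of_mem hi))]

section Measure

variable [MeasurableSpace V] {P : V → Measure (ℕ → V)}

/-- extension of a finite pattern to an infinite one -/
def padf (n : ℕ) (s : Fin (n+1) → V) : ℕ → V := fun i => s ⟨min i n, by omega⟩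

lemma P_cyl (hp : ∀ z w, 0 ≤ p z w) (hP : IsChainLaw p P) (x : V) (n : ℕ)
    (s : Fin (n+1) → V) :
    P x {ω | ∀ i ≤ n, ω i = padf n s i}
      = (if s 0 = x then 1 else 0) * ENNReal.ofReal (pathP p n s) := by
  rw [hP.2 x n (padf n s)]
  congr 1
  · calc ∏ i ∈ Finset.range n, ENNReal.ofReal (p (padf n s i) (padf n s (i+1)))
        = ∏ i : Fin n, ENNReal.ofReal (p (padf n s i) (padf n s (i+1))) :=
          (Fin.prod_univ_eq_prod_range _ n).symm
      _ = ∏ i : Fin n, ENNReal.ofReal (p (s i.castSucc) (s i.succ)) := by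
          apply Finset.prod_congr rfl; intro i _
          have h1 : padf n s i = s i.castSucc := by
            show s ⟨min i.val n, _⟩ = s i.castSucc
            congr 1
            ext
            simp [Nat.min_eq_left (le_of_lt i.isLt)]
          have h2 : padf n s (i.val+1) = s i.succ := by
            show s ⟨min (i.val+1) n, _⟩ = s i.succ
            congr 1
            ext
            simp [Nat.min_eq_left i.isLt]
          rw [h1, h2]
      _ = ENNReal.ofReal (pathP p n s) := by
          rw [pathP, ofReal_prod_of_nonneg _ _ (fun i _ => hp _ _)]

/-- the event of avoiding `y` up to time `n` -/
def avoidEv (y : V) (n : ℕ) : Set (ℕ → V) := {ω | ∀ i ≤ n, ω i ≠ y}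

lemma sum_filter_pathP (hrow : ∀ z, ∑ w, p z w = 1) (x y : V) (n : ℕ) :
    ∑ s ∈ Finset.univ.filter (fun s : Fin (n+1) → V => ∀ i, s i ≠ y),
      (if s 0 = x then pathP p n s else 0) = srv p y n x := by
  rw [Finset.sum_filter]
  rw [← sum_pathP_avoid hrow n x]
  apply Finset.sum_congr rfl; intro s _
  by_cases h1 : ∀ i, s i ≠ y <;> by_cases h2 : s 0 = x <;> simp [h1, h2]

lemma meas_avoidEv_le (hp : ∀ z w, 0 ≤ p z w) (hrow : ∀ z, ∑ w, p z w = 1)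
    (hP : IsChainLaw p P) (x y : V) (n : ℕ) :
    P x (avoidEv y n) ≤ ENNReal.ofReal (srv p y n x) := by
  set F := Finset.univ.filter (fun s : Fin (n+1) → V => ∀ i, s i ≠ y) with hF
  have hsub : avoidEv y n ⊆ ⋃ s ∈ F, {ω | ∀ i ≤ n, ω i = padf n s i} := by
    intro ω hω
    apply Set.mem_biUnion (show (fun i : Fin (n+1) => ω i.val) ∈ F from ?_) ?_
    · rw [hF, Finset.mem_filter]
      exact ⟨Finset.mem_univ _, fun i => hω i.val (Nat.lt_succ_iff.1 i.isLt)⟩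
    · intro i hi
      show ω i = ω (min i n)
      rw [Nat.min_eq_left hi]
  calc P x (avoidEv y n) ≤ ∑ s ∈ F, P x {ω | ∀ i ≤ n, ω i = padf n s i} :=
        le_trans (measure_mono hsub) (measure_biUnion_finset_le _ _)
    _ = ∑ s ∈ F, ENNReal.ofReal (if s 0 = x then pathP p n s else 0) := by
        apply Finset.sum_congr rfl; intro s _
        rw [P_cyl hp hP]
        by_cases h : s 0 = x <;> simp [h]
    _ = ENNReal.ofReal (∑ s ∈ F, (if s 0 = x then pathP p n s else 0)) :=
        (ENNReal.ofReal_sum_of_nonneg (fun s _ => by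
          by_cases h : s 0 = x <;> simp [h, pathP_nonneg hp])).symm
    _ = ENNReal.ofReal (srv p y n x) := by rw [hF, sum_filter_pathP hrow]

lemma meas_avoidEv_compl_le (hp : ∀ z w, 0 ≤ p z w) (hrow : ∀ z, ∑ w, p z w = 1)
    (hP : IsChainLaw p P) (x y : V) (n : ℕ) :
    P x (avoidEv y n)ᶜ ≤ ENNReal.ofReal (1 - srv p y n x) := by
  set F := Finset.univ.filter (fun s : Fin (n+1) → V => ¬ ∀ i, s i ≠ y) with hF
  have hsub : (avoidEv y n)ᶜ ⊆ ⋃ s ∈ F, {ω | ∀ i ≤ n, ω i = padf n s i} := by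
    intro ω hω
    simp only [avoidEv, Set.mem_compl_iff, Set.mem_setOf_eq, not_forall] at hω
    obtain ⟨i, hi, hiy⟩ := hω
    push_neg at hiy
    apply Set.mem_biUnion (show (fun j : Fin (n+1) => ω j.val) ∈ F from ?_) ?_
    · rw [hF, Finset.mem_filter]
      refine ⟨Finset.mem_univ _, ?_⟩
      push_neg
      exact ⟨⟨i, Nat.lt_succ_of_le hi⟩, hiy⟩
    · intro j hj
      show ω j = ω (min j n)
      rw [Nat.min_eq_left hj]
  calc P x (avoidEv y n)ᶜ ≤ ∑ s ∈ F, P x {ω | ∀ i ≤ n, ω i = padf n s i} :=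
        le_trans (measure_mono hsub) (measure_biUnion_finset_le _ _)
    _ = ENNReal.ofReal (∑ s ∈ F, (if s 0 = x then pathP p n s else 0)) := by
        rw [ENNReal.ofReal_sum_of_nonneg (fun s _ => by
          by_cases h : s 0 = x <;> simp [h, pathP_nonneg hp])]
        apply Finset.sum_congr rfl; intro s _
        rw [P_cyl hp hP]
        by_cases h : s 0 = x <;> simp [h]
    _ = ENNReal.ofReal (1 - srv p y n x) := by
        congr 1
        have hsplit := Finset.sum_filter_add_sum_filter_not Finset.univ
          (fun s : Fin (n+1) → V => ∀ i, s i ≠ y)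
          (fun s => if s 0 = x then pathP p n s else 0)
        rw [sum_filter_pathP hrow] at hsplit
        have htot : ∑ s : Fin (n+1) → V, (if s 0 = x then pathP p n s else 0) = 1 :=
          sum_pathP hrow n x
        rw [htot] at hsplit
        rw [hF]
        linarith

lemma meas_avoidEv_eq (hp : ∀ z w, 0 ≤ p z w) (hrow : ∀ z, ∑ w, p z w = 1)
    (hP : IsChainLaw p P) (x y : V) (n : ℕ) :
    P x (avoidEv y n) = ENNReal.ofReal (srv p y n x) := by
  haveI := hP.1 x
  refine le_antisymm (meas_avoidEv_le hp hrow hP x y n) ?_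
  have h1 : (1 : ℝ≥0∞) ≤ P x (avoidEv y n) + ENNReal.ofReal (1 - srv p y n x) := by
    calc (1 : ℝ≥0∞) = P x Set.univ := measure_univ.symm
      _ = P x ((avoidEv y n) ∪ (avoidEv y n)ᶜ) := by rw [Set.union_compl_self]
      _ ≤ P x (avoidEv y n) + P x (avoidEv y n)ᶜ := measure_union_le _ _
      _ ≤ _ := add_le_add le_rfl (meas_avoidEv_compl_le hp hrow hP x y n)
  have h2 : ENNReal.ofReal (srv p y n x)
      = 1 - ENNReal.ofReal (1 - srv p y n x) := by
    have h3 : (0:ℝ) ≤ 1 - srv p y n x := by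
      have := srv_le_one (y := y) hp hrow n x; linarith
    rw [← ENNReal.ofReal_one, ← ENNReal.ofReal_sub _ h3]
    norm_num
  rw [h2]
  exact tsub_le_iff_right.2 h1


lemma hitTime_eq_tsum (y : V) (ω : ℕ → V) :
    hitTime y ω = ∑' n, (avoidEv y n).indicator (fun _ => (1:ℝ≥0∞)) ω := by
  by_cases hex : ∃ m, ω m = y
  · have hm : ω (Nat.find hex) = y := Nat.find_spec hex
    set m := Nat.find hex with hmdef
    have hcond : ∀ n, ω ∈ avoidEv y n ↔ n < m := by
      intro n
      constructor
      · intro h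
        by_contra hc
        push_neg at hc
        exact h m hc hm
      · intro h i hi
        exact Nat.find_min hex (lt_of_le_of_lt hi h)
    have h1 : hitTime y ω = (m : ℝ≥0∞) := by
      apply le_antisymm
      · exact iInf₂_le m hm
      · exact le_iInf₂ fun n hn => by exact_mod_cast Nat.find_le hn
    rw [h1]
    have h2 : ∀ n, (avoidEv y n).indicator (fun _ => (1:ℝ≥0∞)) ω
        = if n < m then 1 else 0 := by
      intro n
      by_cases h : n < m
      · rw [Set.indicator_of_mem ((hcond n).2 h), if_pos h]
      · rw [Set.indicator_of_notMem (fun hmem => h ((hcond n).1 hmem)), if_neg h]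
    rw [tsum_congr h2, tsum_eq_sum (s := Finset.range m)
      (fun n hn => by rw [if_neg (by simpa using hn)])]
    rw [Finset.sum_congr rfl (fun n hn => if_pos (Finset.mem_range.1 hn))]
    simp
  · push_neg at hex
    have h1 : hitTime y ω = ⊤ := by
      rw [hitTime]
      simp [hex]
    have h2 : ∀ n, (avoidEv y n).indicator (fun _ => (1:ℝ≥0∞)) ω = 1 := by
      intro n
      exact Set.indicator_of_mem (show ω ∈ avoidEv y n from fun i _ => hex i) _
    rw [h1, tsum_congr h2, tsum_const_eq_top_of_ne_zero one_ne_zero]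

lemma eHit_eq_tsum (hp : ∀ z w, 0 ≤ p z w) (hrow : ∀ z, ∑ w, p z w = 1)
    (hP : IsChainLaw p P) (x y : V) :
    eHit P x y = ∑' n, ENNReal.ofReal (srv p y n x) := by
  rw [eHit]
  have hup : ∫⁻ ω, hitTime y ω ∂(P x) ≤ ∑' n, ENNReal.ofReal (srv p y n x) := by
    set B := fun n => toMeasurable (P x) (avoidEv y n) with hB
    have hle : ∀ ω, hitTime y ω ≤ ∑' n, (B n).indicator (fun _ => (1:ℝ≥0∞)) ω := by
      intro ω
      rw [hitTime_eq_tsum y ω]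
      exact Summable.tsum_le_tsum (fun n => Set.indicator_le_indicator_of_subset
        (subset_toMeasurable _ _) (fun _ => zero_le) ω) ENNReal.summable ENNReal.summable
    calc ∫⁻ ω, hitTime y ω ∂(P x)
        ≤ ∫⁻ ω, ∑' n, (B n).indicator (fun _ => (1:ℝ≥0∞)) ω ∂(P x) := lintegral_mono hle
      _ = ∑' n, ∫⁻ ω, (B n).indicator (fun _ => (1:ℝ≥0∞)) ω ∂(P x) :=
          lintegral_tsum (fun n => (measurable_const.indicator
            (measurableSet_toMeasurable _ _)).aemeasurable)
      _ = ∑' n, P x (B n) := by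
          apply tsum_congr; intro n
          rw [lintegral_indicator_const (measurableSet_toMeasurable _ _), one_mul]
      _ = ∑' n, P x (avoidEv y n) := by
          apply tsum_congr; intro n
          rw [hB, measure_toMeasurable]
      _ = ∑' n, ENNReal.ofReal (srv p y n x) := by
          apply tsum_congr; intro n
          rw [meas_avoidEv_eq hp hrow hP]
  have hlo : ∑' n, ENNReal.ofReal (srv p y n x) ≤ ∫⁻ ω, hitTime y ω ∂(P x) := by
    haveI := hP.1 x
    rw [ENNReal.tsum_eq_iSup_nat]
    apply iSup_le
    intro N
    set D := fun n => (toMeasurable (P x) (avoidEv y n)ᶜ)ᶜ with hD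
    have hDmeas : ∀ n, MeasurableSet (D n) :=
      fun n => (measurableSet_toMeasurable _ _).compl
    have hDsub : ∀ n, D n ⊆ avoidEv y n := by
      intro n
      rw [hD]
      simp only [Set.compl_subset_comm]
      exact subset_toMeasurable _ _
    have hDmeasge : ∀ n, ENNReal.ofReal (srv p y n x) ≤ P x (D n) := by
      intro n
      have hc : P x (toMeasurable (P x) (avoidEv y n)ᶜ) ≤ ENNReal.ofReal (1 - srv p y n x) := by
        rw [measure_toMeasurable]
        exact meas_avoidEv_compl_le hp hrow hP x y n
      have := measure_compl (measurableSet_toMeasurable (P x) (avoidEv y n)ᶜ)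
        (measure_ne_top (P x) _)
      rw [hD]
      rw [this, measure_univ]
      have h2 : ENNReal.ofReal (srv p y n x)
          = 1 - ENNReal.ofReal (1 - srv p y n x) := by
        have h3 : (0:ℝ) ≤ 1 - srv p y n x := by
          have := srv_le_one (y := y) hp hrow n x; linarith
        rw [← ENNReal.ofReal_one, ← ENNReal.ofReal_sub _ h3]
        norm_num
      rw [h2]
      exact tsub_le_tsub_left hc _
    have hpw : ∀ ω, ∑ n ∈ Finset.range N, (D n).indicator (fun _ => (1:ℝ≥0∞)) ω
        ≤ hitTime y ω := by
      intro ω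
      rw [hitTime_eq_tsum y ω]
      calc ∑ n ∈ Finset.range N, (D n).indicator (fun _ => (1:ℝ≥0∞)) ω
          ≤ ∑ n ∈ Finset.range N, (avoidEv y n).indicator (fun _ => (1:ℝ≥0∞)) ω :=
            Finset.sum_le_sum fun n _ => Set.indicator_le_indicator_of_subset
              (hDsub n) (fun _ => zero_le) ω
        _ ≤ ∑' n, (avoidEv y n).indicator (fun _ => (1:ℝ≥0∞)) ω :=
            ENNReal.sum_le_tsum _
    calc ∑ n ∈ Finset.range N, ENNReal.ofReal (srv p y n x)
        ≤ ∑ n ∈ Finset.range N, P x (D n) := Finset.sum_le_sum fun n _ => hDmeasge n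
      _ = ∫⁻ ω, ∑ n ∈ Finset.range N, (D n).indicator (fun _ => (1:ℝ≥0∞)) ω ∂(P x) := by
          rw [lintegral_finset_sum _ (fun n _ => measurable_const.indicator (hDmeas n))]
          apply Finset.sum_congr rfl; intro n _
          rw [lintegral_indicator_const (hDmeas n), one_mul]
      _ ≤ ∫⁻ ω, hitTime y ω ∂(P x) := lintegral_mono hpw
  exact le_antisymm hup hlo

end Measure

section Potential

variable (μ : V → V → ℝ)

/-- graph Laplacian -/
def lap (g : V → ℝ) (z : V) : ℝ := ∑ w, μ z w * (g z - g w)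

variable {μ}

lemma swap_sum (hsym : ∀ a b, μ a b = μ b a) (g : V → ℝ) :
    ∑ z, ∑ w, μ z w * g w = ∑ z, ∑ w, μ z w * g z := by
  calc ∑ z, ∑ w, μ z w * g w = ∑ z, ∑ w, μ w z * g w := by
        apply Finset.sum_congr rfl; intro z _
        apply Finset.sum_congr rfl; intro w _
        rw [hsym]
    _ = ∑ w, ∑ z, μ w z * g w := Finset.sum_comm
    _ = ∑ z, ∑ w, μ z w * g z := rfl

lemma sum_lap_eq_zero (hsym : ∀ a b, μ a b = μ b a) (g : V → ℝ) :
    ∑ z, lap μ g z = 0 := by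
  have h1 : ∑ z, lap μ g z = (∑ z, ∑ w, μ z w * g z) - ∑ z, ∑ w, μ z w * g w := by
    rw [← Finset.sum_sub_distrib]
    apply Finset.sum_congr rfl; intro z _
    rw [lap, ← Finset.sum_sub_distrib]
    apply Finset.sum_congr rfl; intro w _
    ring
  rw [h1, swap_sum hsym g, sub_self]

lemma cross_eq (hsym : ∀ a b, μ a b = μ b a) (g k : V → ℝ) :
    ∑ a, ∑ b, μ a b * (g a - g b) * (k a - k b) = 2 * ∑ z, k z * lap μ g z := by
  have h1 : ∑ a, ∑ b, μ a b * (g a - g b) * (k a - k b)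
      = (∑ a, ∑ b, μ a b * (g a - g b) * k a) - ∑ a, ∑ b, μ a b * (g a - g b) * k b := by
    rw [← Finset.sum_sub_distrib]
    apply Finset.sum_congr rfl; intro a _
    rw [← Finset.sum_sub_distrib]
    apply Finset.sum_congr rfl; intro b _
    ring
  have h2 : ∑ a, ∑ b, μ a b * (g a - g b) * k a = ∑ z, k z * lap μ g z := by
    apply Finset.sum_congr rfl; intro a _
    rw [lap, Finset.mul_sum]
    apply Finset.sum_congr rfl; intro b _
    ring
  have h3 : ∑ a, ∑ b, μ a b * (g a - g b) * k b = - ∑ z, k z * lap μ g z := by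
    calc ∑ a, ∑ b, μ a b * (g a - g b) * k b
        = ∑ b, ∑ a, μ a b * (g a - g b) * k b := Finset.sum_comm
      _ = ∑ b, k b * (- lap μ g b) := by
          apply Finset.sum_congr rfl; intro b _
          calc ∑ a, μ a b * (g a - g b) * k b
              = ∑ a, -(μ b a * (g b - g a)) * k b := by
                apply Finset.sum_congr rfl; intro a _
                rw [hsym a b]; ring
            _ = (∑ a, -(μ b a * (g b - g a))) * k b := (Finset.sum_mul _ _ _).symm
            _ = k b * (- lap μ g b) := by
                rw [lap, Finset.sum_neg_distrib]; ring
      _ = - ∑ z, k z * lap μ g z := by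
          rw [← Finset.sum_neg_distrib]
          apply Finset.sum_congr rfl; intro z _
          ring
  rw [h1, h2, h3]
  ring

lemma energy_eq_sum_lap (hsym : ∀ a b, μ a b = μ b a) (g : V → ℝ) :
    energy μ g = ∑ z, g z * lap μ g z := by
  have h1 : ∑ a : V, ∑ b : V, μ a b * (g a - g b)^2
      = ∑ a, ∑ b, μ a b * (g a - g b) * (g a - g b) := by
    apply Finset.sum_congr rfl; intro a _
    apply Finset.sum_congr rfl; intro b _
    ring
  rw [energy, h1, cross_eq hsym g g]
  ring

lemma energy_min (hsym : ∀ a b, μ a b = μ b a) (hnn : ∀ a b, 0 ≤ μ a b)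
    {x y : V} {u g : V → ℝ}
    (hlap : ∀ z, z ≠ x → z ≠ y → lap μ u z = 0)
    (hux : u x = 1) (huy : u y = 0) (hgx : g x = 1) (hgy : g y = 0) :
    energy μ u ≤ energy μ g := by
  set w : V → ℝ := fun z => g z - u z with hw
  have hcross : ∑ a, ∑ b, μ a b * (u a - u b) * (w a - w b) = 0 := by
    rw [cross_eq hsym]
    have hz : ∀ z, w z * lap μ u z = 0 := by
      intro z
      by_cases h1 : z = x
      · subst h1; simp [hw, hgx, hux]
      · by_cases h2 : z = y
        · subst h2; simp [hw, hgy, huy]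
        · rw [hlap z h1 h2, mul_zero]
    rw [Finset.sum_eq_zero (fun z _ => hz z), mul_zero]
  have hquad : 0 ≤ ∑ a : V, ∑ b : V, μ a b * (w a - w b)^2 :=
    Finset.sum_nonneg fun a _ => Finset.sum_nonneg fun b _ =>
      mul_nonneg (hnn a b) (sq_nonneg _)
  have hexpand : ∑ a : V, ∑ b : V, μ a b * (g a - g b)^2
      = (∑ a : V, ∑ b : V, μ a b * (u a - u b)^2)
        + (∑ a, ∑ b, μ a b * (u a - u b) * (w a - w b)) * 2
        + ∑ a : V, ∑ b : V, μ a b * (w a - w b)^2 := by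
    have step : ∀ a b : V, μ a b * (g a - g b)^2
        = μ a b * (u a - u b)^2 + (μ a b * (u a - u b) * (w a - w b)) * 2
          + μ a b * (w a - w b)^2 := by
      intro a b
      have hga : g a = u a + w a := by rw [hw]; ring
      have hgb : g b = u b + w b := by rw [hw]; ring
      rw [hga, hgb]; ring
    calc ∑ a : V, ∑ b : V, μ a b * (g a - g b)^2
        = ∑ a : V, ∑ b : V, (μ a b * (u a - u b)^2
            + (μ a b * (u a - u b) * (w a - w b)) * 2 + μ a b * (w a - w b)^2) := by
          apply Finset.sum_congr rfl; intro a _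
          apply Finset.sum_congr rfl; intro b _
          exact step a b
      _ = _ := by
          simp only [Finset.sum_add_distrib, ← Finset.sum_mul]
  rw [energy, energy]
  rw [hexpand, hcross]
  linarith

end Potential

section Main

variable [MeasurableSpace V]

lemma eHit_self_eq_zero (p : V → V → ℝ) (P : V → Measure (ℕ → V))
    (hP : IsChainLaw p P) (x : V) : eHit P x x = 0 := by
  haveI := hP.1 x
  have hnull : P x {ω : ℕ → V | ω 0 ≠ x} = 0 := by
    have hsub : {ω : ℕ → V | ω 0 ≠ x} ⊆
        ⋃ z ∈ Finset.univ.erase x, {ω : ℕ → V | ∀ i ≤ 0, ω i = Function.const ℕ z i} := by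
      intro ω hω
      apply Set.mem_biUnion (Finset.mem_erase.2 ⟨hω, Finset.mem_univ _⟩)
      intro i hi
      rw [Nat.le_zero.1 hi]
      rfl
    refine le_antisymm ?_ zero_le
    calc P x {ω : ℕ → V | ω 0 ≠ x}
        ≤ ∑ z ∈ Finset.univ.erase x, P x {ω : ℕ → V | ∀ i ≤ 0, ω i = Function.const ℕ z i} :=
          le_trans (measure_mono hsub) (measure_biUnion_finset_le _ _)
      _ = 0 := by
          apply Finset.sum_eq_zero
          intro z hz
          rw [hP.2 x 0 (Function.const ℕ z)]
          simp [Function.const_apply, (Finset.mem_erase.1 hz).1]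
  have hae : ∀ᵐ ω ∂(P x), hitTime x ω = 0 := by
    rw [ae_iff]
    apply measure_mono_null _ hnull
    intro ω hω
    simp only [Set.mem_setOf_eq] at hω ⊢
    intro h0
    apply hω
    have h1 : hitTime x ω ≤ ((0:ℕ) : ℝ≥0∞) := iInf₂_le (0:ℕ) h0
    simpa using h1
  rw [eHit, lintegral_congr_ae hae, lintegral_zero]

lemma commute_ne (μ : V → V → ℝ) (hsym : ∀ x y, μ x y = μ y x)
    (hnn : ∀ x y, 0 ≤ μ x y) (hconn : (weightGraph μ).Connected)
    (P : V → Measure (ℕ → V)) (hP : IsChainLaw (walkStep μ) P)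
    {x y : V} (hxy : x ≠ y) :
    eHit P x y + eHit P y x = ENNReal.ofReal (totalWeight μ * Reff μ x y) := by
  haveI : Nontrivial V := ⟨⟨x, y, hxy⟩⟩
  set p := walkStep μ with hpdef
  have hpos : ∀ z w : V, (weightGraph μ).Adj z w → 0 < μ z w := by
    intro z w h
    rcases (show z ≠ w ∧ (μ z w ≠ 0 ∨ μ w z ≠ 0) from h).2 with h' | h'
    · exact lt_of_le_of_ne (hnn z w) (Ne.symm h')
    · rw [hsym]; exact lt_of_le_of_ne (hnn w z) (Ne.symm h')
  have hdeg : ∀ z : V, 0 < ∑ w, μ z w := by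
    intro z
    obtain ⟨t, htz⟩ : ∃ t : V, t ≠ z := exists_ne z
    obtain ⟨wlk⟩ := hconn.preconnected z t
    have hadj : ∃ w, (weightGraph μ).Adj z w := by
      cases wlk with
      | nil => exact absurd rfl htz
      | cons h q => exact ⟨_, h⟩
    obtain ⟨w, hw⟩ := hadj
    calc (0:ℝ) < μ z w := hpos z w hw
      _ ≤ ∑ w', μ z w' := Finset.single_le_sum (fun i _ => hnn z i) (Finset.mem_univ w)
  have hp : ∀ z w, 0 ≤ p z w := fun z w => div_nonneg (hnn z w) (le_of_lt (hdeg z))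
  have hrow : ∀ z, ∑ w, p z w = 1 := by
    intro z
    rw [hpdef]
    show ∑ w, μ z w / (∑ w', μ z w') = 1
    rw [← Finset.sum_div, div_self (ne_of_gt (hdeg z))]
  have hGp : ∀ z w, (weightGraph μ).Adj z w → 0 < p z w :=
    fun z w h => div_pos (hpos z w h) (hdeg z)
  have hsum : ∀ t z : V, Summable (fun n => srv p t n z) := by
    intro t z
    obtain ⟨k, c, hk, hc0, hc1, hc⟩ := exists_srv_bound (y := t) hconn hGp hp hrow
    exact srv_summable hp hrow hk hc0 hc1 hc z
  set Hxy : V → ℝ := fun z => ∑' n, srv p y n z with hHxy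
  set Hyx : V → ℝ := fun z => ∑' n, srv p x n z with hHyx
  have hHxy_nonneg : ∀ z, 0 ≤ Hxy z := fun z => tsum_nonneg (fun n => srv_nonneg hp n z)
  have hHyx_nonneg : ∀ z, 0 ≤ Hyx z := fun z => tsum_nonneg (fun n => srv_nonneg hp n z)
  have hHxyy : Hxy y = 0 := by
    rw [hHxy]
    simp [srv_y]
  have hHyxx : Hyx x = 0 := by
    rw [hHyx]
    simp [srv_y]
  have hHxyx_ge : 1 ≤ Hxy x := by
    have h0 : srv p y 0 x = 1 := by simp [hxy]
    rw [hHxy]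
    calc (1:ℝ) = srv p y 0 x := h0.symm
      _ ≤ ∑' n, srv p y n x :=
          Summable.le_tsum (hsum y x) 0 (fun n _ => srv_nonneg hp n x)
  have hEx : eHit P x y = ENNReal.ofReal (Hxy x) := by
    rw [eHit_eq_tsum hp hrow hP x y, hHxy,
      ENNReal.ofReal_tsum_of_nonneg (fun n => srv_nonneg hp n x) (hsum y x)]
  have hEy : eHit P y x = ENNReal.ofReal (Hyx y) := by
    rw [eHit_eq_tsum hp hrow hP y x, hHyx,
      ENNReal.ofReal_tsum_of_nonneg (fun n => srv_nonneg hp n y) (hsum x y)]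
  -- Laplacian of hitting-time potentials
  have hlapH : ∀ (t : V) (H : V → ℝ), (H = fun z => ∑' n, srv p t n z) →
      ∀ z, z ≠ t → lap μ H z = ∑ w, μ z w := by
    intro t H hH z hz
    have heq : H z = 1 + ∑ w, p z w * H w := by
      rw [hH]
      exact srv_tsum_eq hp (hsum t) hz
    have hpt : ∀ w, (∑ w', μ z w') * (p z w * H w) = μ z w * H w := by
      intro w
      rw [hpdef]
      show (∑ w', μ z w') * (μ z w / (∑ w', μ z w') * H w) = μ z w * H w
      field_simp
      rw [mul_assoc]
      exact mul_div_cancel_left₀ _ (ne_of_gt (hdeg z))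
    have hmul : (∑ w, μ z w) * H z = (∑ w, μ z w) + ∑ w, μ z w * H w := by
      rw [heq, mul_add, mul_one, Finset.mul_sum]
      congr 1
      exact Finset.sum_congr rfl fun w _ => hpt w
    have hsplit : lap μ H z = (∑ w, μ z w) * H z - ∑ w, μ z w * H w := by
      rw [lap, Finset.sum_mul, ← Finset.sum_sub_distrib]
      apply Finset.sum_congr rfl; intro w _
      ring
    rw [hsplit, hmul]
    ring
  -- the commute-time potential
  set f : V → ℝ := fun z => Hxy z - Hyx z with hf
  set D : ℝ := Hxy x + Hyx y with hD
  have hDpos : 0 < D := by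
    have := hHyx_nonneg y
    rw [hD]
    linarith
  have hWpos : 0 < totalWeight μ := by
    show (0:ℝ) < ∑ z, ∑ w, μ z w
    calc (0:ℝ) < ∑ w, μ x w := hdeg x
      _ ≤ ∑ z, ∑ w, μ z w :=
          Finset.single_le_sum
            (fun z _ => Finset.sum_nonneg fun w _ => hnn z w) (Finset.mem_univ x)
  have hlin : ∀ z, lap μ f z = lap μ Hxy z - lap μ Hyx z := by
    intro z
    rw [lap, lap, lap, ← Finset.sum_sub_distrib]
    apply Finset.sum_congr rfl; intro w _
    rw [hf]
    ring
  have hlapf_mid : ∀ z, z ≠ x → z ≠ y → lap μ f z = 0 := by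
    intro z hzx hzy
    rw [hlin, hlapH y Hxy hHxy z hzy, hlapH x Hyx hHyx z hzx, sub_self]
  have hlapf_x : lap μ f x = totalWeight μ := by
    have hzero := sum_lap_eq_zero hsym Hyx
    rw [← Finset.add_sum_erase _ _ (Finset.mem_univ x)] at hzero
    have herase : ∑ z ∈ Finset.univ.erase x, lap μ Hyx z
        = ∑ z ∈ Finset.univ.erase x, ∑ w, μ z w :=
      Finset.sum_congr rfl fun z hz => hlapH x Hyx hHyx z (Finset.mem_erase.1 hz).1
    rw [herase] at hzero
    have h1 : lap μ Hyx x = - ∑ z ∈ Finset.univ.erase x, ∑ w, μ z w := by linarith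
    rw [hlin, hlapH y Hxy hHxy x hxy, h1]
    show (∑ w, μ x w) - (- ∑ z ∈ Finset.univ.erase x, ∑ w, μ z w) = ∑ z, ∑ w, μ z w
    rw [← Finset.add_sum_erase _ (fun z => ∑ w, μ z w) (Finset.mem_univ x)]
    ring
  have hlapf_y : lap μ f y = - totalWeight μ := by
    have hzero := sum_lap_eq_zero hsym f
    rw [← Finset.add_sum_erase _ _ (Finset.mem_univ y)] at hzero
    have herase : ∑ z ∈ Finset.univ.erase y, lap μ f z = lap μ f x := by
      apply Finset.sum_eq_single_of_mem x
        (Finset.mem_erase.2 ⟨hxy, Finset.mem_univ x⟩)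
      intro z hz hzx
      exact hlapf_mid z hzx (Finset.mem_erase.1 hz).1
    rw [herase, hlapf_x] at hzero
    linarith
  -- normalized potential
  set ufun : V → ℝ := fun z => (f z - f y) / D with hufun
  have hfxy : f x - f y = D := by
    rw [hf, hD]
    simp only [hHyxx, hHxyy]
    ring
  have hux : ufun x = 1 := by
    rw [hufun]
    show (f x - f y) / D = 1
    rw [hfxy, div_self (ne_of_gt hDpos)]
  have huy : ufun y = 0 := by
    rw [hufun]
    show (f y - f y) / D = 0
    rw [sub_self, zero_div]
  have hlapu : ∀ z, lap μ ufun z = lap μ f z / D := by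
    intro z
    rw [lap, lap, Finset.sum_div]
    apply Finset.sum_congr rfl; intro w _
    rw [hufun]
    show μ z w * ((f z - f y) / D - (f w - f y) / D) = μ z w * (f z - f w) / D
    field_simp
    ring
  have henergy : energy μ ufun = totalWeight μ / D := by
    rw [energy_eq_sum_lap hsym]
    rw [Finset.sum_eq_single_of_mem x (Finset.mem_univ x)]
    · rw [hux, hlapu x, hlapf_x, one_mul]
    · intro z _ hzx
      by_cases hzy : z = y
      · subst hzy; rw [huy, zero_mul]
      · rw [hlapu, hlapf_mid z hzx hzy, zero_div, mul_zero]
  have hmem : energy μ ufun ∈ {E : ℝ | ∃ g : V → ℝ, g x = 1 ∧ g y = 0 ∧ E = energy μ g} :=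
    ⟨ufun, hux, huy, rfl⟩
  have hlb : ∀ E ∈ {E : ℝ | ∃ g : V → ℝ, g x = 1 ∧ g y = 0 ∧ E = energy μ g},
      energy μ ufun ≤ E := by
    rintro E ⟨g, hgx, hgy, rfl⟩
    apply energy_min hsym hnn _ hux huy hgx hgy
    intro z hzx hzy
    rw [hlapu, hlapf_mid z hzx hzy, zero_div]
  have hsInf : sInf {E : ℝ | ∃ g : V → ℝ, g x = 1 ∧ g y = 0 ∧ E = energy μ g}
      = totalWeight μ / D := by
    rw [← henergy]
    exact le_antisymm (csInf_le ⟨energy μ ufun, hlb⟩ hmem) (le_csInf ⟨_, hmem⟩ hlb)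
  have hReff : Reff μ x y = D / totalWeight μ := by
    rw [Reff, if_neg hxy]
    have hset : {E : ℝ | ∃ g : V → ℝ, g x = 1 ∧ g y = 0 ∧ E = energy μ g}
        = {E : ℝ | ∃ f : V → ℝ, f x = 1 ∧ f y = 0 ∧ E = energy μ f} := rfl
    rw [← hset, hsInf, inv_div]
  rw [hEx, hEy, hReff, ← ENNReal.ofReal_add (hHxy_nonneg x) (hHyx_nonneg y)]
  have hfin : totalWeight μ * (D / totalWeight μ) = D := by
    field_simp
  rw [hfin, hD]

end Main

end CTI
end

open MeasureTheory ENNReal Filter ProbabilityTheory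
/-- Commute time identity -/
theorem statement2 {V : Type*} [Fintype V] [MeasurableSpace V]
    (μ : V → V → ℝ) (hsym : ∀ x y, μ x y = μ y x) (hnn : ∀ x y, 0 ≤ μ x y)
    (hconn : (weightGraph μ).Connected)
    (P : V → Measure (ℕ → V))
    (hP : IsChainLaw (walkStep μ) P) :
    ∀ x y : V, eHit P x y + eHit P y x = ENNReal.ofReal (totalWeight μ * Reff μ x y) := by
  intro x y
  by_cases hxy : x = y
  · subst hxy
    rw [CTI.eHit_self_eq_zero (walkStep μ) P hP x, Reff, if_pos rfl]
    simp
  · exact CTI.commute_ne μ hsym hnn hconn P hP hxy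
end

section
/- Let (S_n)_{n∈Z} be a two-sided simple random walk on Z^d started at 0, d ≥ 5, and let 0 < T_1 < T_2 < ⋯ enumerate the positive cut-times (times n with S_{(−∞,n]} ∩ S_{[n+1,∞)} = ∅). For the range graph G^N with vertices {S_0,…,S_N} and edges {S_{n−1},S_n}, every path in G^N from S_0 to the cut-point C_M = S_{T_M} (where T_M ≤ N < T_{M+1}) must traverse each of the edges {S_{T_n}, S_{T_n+1}} for 1 ≤ n ≤ M−1, and hence by Nash-Williams R_eff(S_0, C_M) ≥ M − 1. -/
open MeasureTheory ENNReal Filter ProbabilityTheory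
/-- `n` is a cut-time of the two-sided path `S`: `S_{(-∞,n]} ∩ S_{[n+1,∞)} = ∅`. -/
def IsCutTime {d : ℕ} (S : ℤ → Fin d → ℤ) (n : ℤ) : Prop :=
  ∀ a b : ℤ, a ≤ n → n < b → S a ≠ S b

/-- Vertex set of the range graph: `{S_0, …, S_N}`. -/
def rangeFinset {d : ℕ} (S : ℤ → Fin d → ℤ) (N : ℕ) : Finset (Fin d → ℤ) :=
  Finset.image (fun k : Fin (N + 1) => S ((k : ℕ) : ℤ)) Finset.univ

/-- The range graph `G^N` with vertices `{S_0, …, S_N}` and edges `{S_{n-1}, S_n}`. -/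
def rangeGraph {d : ℕ} (S : ℤ → Fin d → ℤ) (N : ℕ) :
    SimpleGraph {x : Fin d → ℤ // x ∈ rangeFinset S N} where
  Adj u v := u ≠ v ∧ ∃ n : ℕ, n < N ∧ s(u.1, v.1) = s(S (n : ℤ), S ((n : ℤ) + 1))
  symm := by
    constructor
    rintro u v ⟨h1, n, hn, he⟩
    refine ⟨h1.symm, n, hn, ?_⟩
    rw [Sym2.eq_swap]; exact he
  loopless := ⟨fun u h => h.1 rfl⟩

/-- The vertex `S_n` of the range graph, for `n ≤ N`. -/
def rangeVert {d : ℕ} (S : ℤ → Fin d → ℤ) (N : ℕ) (n : ℕ) (h : n ≤ N) :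
    {x : Fin d → ℤ // x ∈ rangeFinset S N} :=
  ⟨S (n : ℤ), Finset.mem_image.mpr ⟨⟨n, Nat.lt_succ_of_le h⟩, Finset.mem_univ _, rfl⟩⟩

section Statement14Aux

open Finset

/-- A vertex of the range graph lies in the "past" of time `t`. -/
def inA {d : ℕ} (S : ℤ → Fin d → ℤ) (N t : ℕ)
    (v : {x : Fin d → ℤ // x ∈ rangeFinset S N}) : Prop :=
  ∃ j : ℕ, j ≤ t ∧ j ≤ N ∧ S (j : ℤ) = v.1

lemma cross_eq {d : ℕ} {S : ℤ → Fin d → ℤ} {N t : ℕ} (hc : IsCutTime S (t : ℤ))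
    {u v : {x : Fin d → ℤ // x ∈ rangeFinset S N}}
    (hadj : (rangeGraph S N).Adj u v) (hu : inA S N t u) (hv : ¬ inA S N t v) :
    u.1 = S ((t : ℕ) : ℤ) ∧ v.1 = S (((t + 1 : ℕ)) : ℤ) := by
  obtain ⟨hne, n, hnN, he⟩ := hadj
  obtain ⟨j, hjt, hjN, hju⟩ := hu
  have hcast : ((n : ℤ) + 1) = ((n + 1 : ℕ) : ℤ) := by push_cast; ring
  rw [Sym2.eq_iff] at he
  rcases he with ⟨h1, h2⟩ | ⟨h1, h2⟩
  · -- `u.1 = S n`, `v.1 = S (n+1)`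
    have hn1t : ¬ (n + 1 ≤ t) := by
      intro h
      exact hv ⟨n + 1, h, hnN, by rw [← hcast, ← h2]⟩
    have hnt : n ≤ t := by
      by_contra hlt
      push_neg at hlt
      exact hc j n (by exact_mod_cast hjt) (by exact_mod_cast hlt) (hju.trans h1)
    have hEq : n = t := by omega
    subst hEq
    exact ⟨h1, by rw [h2, hcast]⟩
  · -- `u.1 = S (n+1)`, `v.1 = S n`: impossible
    exfalso
    have hnt : ¬ (n ≤ t) := fun h => hv ⟨n, h, hnN.le, h2.symm⟩
    push_neg at hnt
    have hlt : (t : ℤ) < (n : ℤ) + 1 := by exact_mod_cast Nat.lt_succ_of_lt hnt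
    exact hc j ((n : ℤ) + 1) (by exact_mod_cast hjt) hlt (hju.trans h1)

lemma step_ne {d : ℕ} {S : ℤ → Fin d → ℤ}
    (hstep : ∀ n : ℤ, (∑ i : Fin d, (S (n + 1) i - S n i).natAbs) = 1) (n : ℤ) :
    S n ≠ S (n + 1) := by
  intro h
  have h2 := hstep n
  rw [← h] at h2
  simp at h2

lemma energy_ge_sq {V : Type*} [Fintype V] {G : SimpleGraph V} {f : V → ℝ} {u v : V}
    (hadj : G.Adj u v) : (f u - f v) ^ 2 ≤ energy (unitWeight G) f := by
  classical
  have hnn : ∀ a b : V, 0 ≤ unitWeight G a b * (f a - f b) ^ 2 := by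
    intro a b
    apply mul_nonneg _ (sq_nonneg _)
    unfold unitWeight; split <;> norm_num
  have h1 : ∀ a b : V, unitWeight G a b * (f a - f b) ^ 2 ≤
      ∑ y : V, unitWeight G a y * (f a - f y) ^ 2 :=
    fun a b => Finset.single_le_sum (fun y _ => hnn a y) (Finset.mem_univ b)
  have h3 : ∑ a ∈ ({u, v} : Finset V), ∑ y : V, unitWeight G a y * (f a - f y) ^ 2 ≤
      ∑ a : V, ∑ y : V, unitWeight G a y * (f a - f y) ^ 2 :=
    Finset.sum_le_sum_of_subset_of_nonneg (Finset.subset_univ _)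
      (fun a _ _ => Finset.sum_nonneg fun y _ => hnn a y)
  rw [Finset.sum_pair hadj.ne] at h3
  have h4 := h1 u v
  have h5 := h1 v u
  have huv : unitWeight G u v = 1 := if_pos hadj
  have hvu : unitWeight G v u = 1 := if_pos hadj.symm
  rw [huv, one_mul] at h4
  rw [hvu, one_mul] at h5
  have hsq : (f v - f u) ^ 2 = (f u - f v) ^ 2 := by ring
  rw [hsq] at h5
  unfold energy
  linarith

lemma energy_nonneg' {V : Type*} [Fintype V] (G : SimpleGraph V) (f : V → ℝ) :
    0 ≤ energy (unitWeight G) f := by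
  unfold energy
  apply mul_nonneg (by norm_num)
  apply Finset.sum_nonneg
  intro a _
  apply Finset.sum_nonneg
  intro b _
  apply mul_nonneg _ (sq_nonneg _)
  unfold unitWeight; split <;> norm_num

end Statement14Aux

/-- for a two-sided nearest-neighbour path `S` on `ℤ^d`, `d ≥ 5`, with positive
cut-times `T_1 < T_2 < ⋯` and `T_M ≤ N < T_{M+1}`, every path in the range graph `G^N` from
`S_0` to the cut-point `C_M = S_{T_M}` traverses each edge `{S_{T_n}, S_{T_n + 1}}`,
`1 ≤ n ≤ M - 1`; hence by Nash–Williams `R_eff(S_0, C_M) ≥ M - 1`. -/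
theorem statement14 (d : ℕ) (hd : 5 ≤ d) (S : ℤ → Fin d → ℤ)
    (hS0 : S 0 = 0)
    (hstep : ∀ n : ℤ, (∑ i : Fin d, (S (n + 1) i - S n i).natAbs) = 1)
    (T : ℕ → ℕ) (hmono : StrictMono T) (hT1 : 0 < T 1)
    (hcut : ∀ n : ℕ, 1 ≤ n → IsCutTime S (T n : ℤ))
    (N M : ℕ) (hM : 1 ≤ M) (hTM : T M ≤ N) (hN : N < T (M + 1)) :
    (∀ (w : (rangeGraph S N).Walk (rangeVert S N 0 (Nat.zero_le N)) (rangeVert S N (T M) hTM)),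
      ∀ n : ℕ, 1 ≤ n → n ≤ M - 1 → ∀ (h1 : T n ≤ N) (h2 : T n + 1 ≤ N),
        s(rangeVert S N (T n) h1, rangeVert S N (T n + 1) h2) ∈ w.edges) ∧
    (M : ℝ) - 1 ≤
      Reff (unitWeight (rangeGraph S N)) (rangeVert S N 0 (Nat.zero_le N))
        (rangeVert S N (T M) hTM) := by
  classical
  have hcutedge : ∀ (w : (rangeGraph S N).Walk (rangeVert S N 0 (Nat.zero_le N))
      (rangeVert S N (T M) hTM)),
      ∀ n : ℕ, 1 ≤ n → n < M → ∀ (h1 : T n ≤ N) (h2 : T n + 1 ≤ N),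
      s(rangeVert S N (T n) h1, rangeVert S N (T n + 1) h2) ∈ w.edges := by
    intro w n h1n hnM h1 h2
    have hc := hcut n h1n
    have hx : inA S N (T n) (rangeVert S N 0 (Nat.zero_le N)) :=
      ⟨0, Nat.zero_le _, Nat.zero_le _, rfl⟩
    have hy : ¬ inA S N (T n) (rangeVert S N (T M) hTM) := by
      rintro ⟨j, hjt, hjN, hj⟩
      exact hc (j : ℤ) ((T M : ℕ) : ℤ) (by exact_mod_cast hjt)
        (by exact_mod_cast hmono hnM) hj
    obtain ⟨dt, hdmem, hdfst, hdsnd⟩ :=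
      w.exists_boundary_dart {v | inA S N (T n) v} hx hy
    have hce := cross_eq hc dt.adj hdfst hdsnd
    have hfst : dt.fst = rangeVert S N (T n) h1 := Subtype.ext hce.1
    have hsnd : dt.snd = rangeVert S N (T n + 1) h2 := Subtype.ext hce.2
    have hedge : dt.edge = s(rangeVert S N (T n) h1, rangeVert S N (T n + 1) h2) := by
      rw [← hfst, ← hsnd]; rfl
    rw [← hedge]
    exact List.mem_map_of_mem hdmem
  refine ⟨fun w n h1n hnM h1 h2 => hcutedge w n h1n (by omega) h1 h2, ?_⟩
  clear hcutedge
  set V := {x : Fin d → ℤ // x ∈ rangeFinset S N} with hVdef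
  set G := rangeGraph S N with hGdef
  set μ := unitWeight G with hμdef
  set x : V := rangeVert S N 0 (Nat.zero_le N) with hxdef
  set y : V := rangeVert S N (T M) hTM with hydef
  by_cases hM2 : 2 ≤ M
  swap
  · -- M = 1 : the bound is trivial since `Reff ≥ 0`.
    have hM1 : M = 1 := by omega
    subst hM1
    have h0 : ((1 : ℕ) : ℝ) - 1 = 0 := by norm_num
    rw [h0]
    rw [Reff]
    split
    · exact le_refl 0
    · apply inv_nonneg.mpr
      apply Real.sInf_nonneg
      rintro E ⟨f, _, _, rfl⟩
      exact energy_nonneg' _ f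
  -- Main case : M ≥ 2
  have hTMpos : 0 < T M := lt_of_lt_of_le hT1 (hmono.monotone hM)
  have hMR : (0 : ℝ) < (M : ℝ) - 1 := by
    have : (2 : ℝ) ≤ (M : ℝ) := by exact_mod_cast hM2
    linarith
  set c : ℝ := ((M : ℝ) - 1)⁻¹ with hcdef
  have hcpos : 0 < c := inv_pos.mpr hMR
  have hxy : x ≠ y := by
    intro h
    have hval : S ((0 : ℕ) : ℤ) = S ((T M : ℕ) : ℤ) := congrArg Subtype.val h
    exact hcut 1 le_rfl 0 ((T M : ℕ) : ℤ) (by exact_mod_cast Nat.zero_le _)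
      (by exact_mod_cast hmono (by omega : 1 < M)) (by exact_mod_cast hval)
  -- the test function
  set cnt : V → ℕ := fun v =>
    ((Finset.Icc 1 (M - 1)).filter (fun n => inA S N (T n) v)).card with hcntdef
  set f : V → ℝ := fun v => (cnt v : ℝ) * c with hfdef
  have hfx : f x = 1 := by
    have hall : ∀ n ∈ Finset.Icc 1 (M - 1), inA S N (T n) x :=
      fun n _ => ⟨0, Nat.zero_le _, Nat.zero_le _, rfl⟩
    have hcx : cnt x = M - 1 := by
      simp only [hcntdef]
      rw [Finset.filter_true_of_mem hall, Nat.card_Icc]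
      omega
    have hcast : ((M - 1 : ℕ) : ℝ) = (M : ℝ) - 1 := by
      push_cast [hM]; ring
    simp only [hfdef, hcx, hcast, hcdef]
    exact mul_inv_cancel₀ hMR.ne'
  have hfy : f y = 0 := by
    have hnone : ∀ n ∈ Finset.Icc 1 (M - 1), ¬ inA S N (T n) y := by
      rintro n hn ⟨j, hjt, hjN, hj⟩
      rw [Finset.mem_Icc] at hn
      exact hcut n hn.1 (j : ℤ) ((T M : ℕ) : ℤ) (by exact_mod_cast hjt)
        (by exact_mod_cast hmono (by omega : n < M)) hj
    have hcy : cnt y = 0 := by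
      simp only [hcntdef]
      rw [Finset.filter_false_of_mem hnone, Finset.card_empty]
    simp [hfdef, hcy]
  -- the crossing predicate
  set q : ℕ → V → V → Prop := fun n u v =>
    (u.1 = S ((T n : ℕ) : ℤ) ∧ v.1 = S ((T n + 1 : ℕ) : ℤ)) ∨
    (u.1 = S ((T n + 1 : ℕ) : ℤ) ∧ v.1 = S ((T n : ℕ) : ℤ)) with hqdef
  have hqsymm : ∀ n u v, q n u v ↔ q n v u := by
    intro n u v
    simp only [hqdef]
    constructor <;> rintro (⟨ha, hb⟩ | ⟨ha, hb⟩)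
    exacts [Or.inr ⟨hb, ha⟩, Or.inl ⟨hb, ha⟩, Or.inr ⟨hb, ha⟩, Or.inl ⟨hb, ha⟩]
  have hcross : ∀ n ∈ Finset.Icc 1 (M - 1), ∀ u v : V, G.Adj u v → ¬ q n u v →
      (inA S N (T n) u ↔ inA S N (T n) v) := by
    intro n hn u v hadj hq
    rw [Finset.mem_Icc] at hn
    constructor
    · intro hu
      by_contra hv
      exact hq (Or.inl (cross_eq (hcut n hn.1) hadj hu hv))
    · intro hv
      by_contra hu
      have hce := cross_eq (hcut n hn.1) hadj.symm hv hu
      exact hq (Or.inr ⟨hce.2, hce.1⟩)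
  have hqone : ∀ u v : V, ((Finset.Icc 1 (M - 1)).filter (fun n => q n u v)).card ≤ 1 := by
    intro u v
    rw [Finset.card_le_one]
    have key : ∀ a b : ℕ, 1 ≤ a → a < b → q a u v → q b u v → False := by
      intro a b h1a hab hqa hqb
      have hTab : (T a : ℤ) < (T b : ℤ) := by exact_mod_cast hmono hab
      have hTab1 : (T a : ℤ) < ((T b + 1 : ℕ) : ℤ) := by
        exact_mod_cast Nat.lt_succ_of_lt (hmono hab)
      have hca := hcut a h1a
      have h1 : u.1 = S ((T a : ℕ) : ℤ) ∨ v.1 = S ((T a : ℕ) : ℤ) := by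
        rcases hqa with ⟨h, _⟩ | ⟨_, h⟩
        exacts [Or.inl h, Or.inr h]
      have hub : u.1 = S ((T b : ℕ) : ℤ) ∨ u.1 = S ((T b + 1 : ℕ) : ℤ) := by
        rcases hqb with ⟨h, _⟩ | ⟨h, _⟩
        exacts [Or.inl h, Or.inr h]
      have hvb : v.1 = S ((T b : ℕ) : ℤ) ∨ v.1 = S ((T b + 1 : ℕ) : ℤ) := by
        rcases hqb with ⟨_, h⟩ | ⟨_, h⟩
        exacts [Or.inr h, Or.inl h]
      rcases h1 with h | h
      · rcases hub with h' | h'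
        · exact hca _ _ le_rfl hTab (h.symm.trans h')
        · exact hca _ _ le_rfl hTab1 (h.symm.trans h')
      · rcases hvb with h' | h'
        · exact hca _ _ le_rfl hTab (h.symm.trans h')
        · exact hca _ _ le_rfl hTab1 (h.symm.trans h')
    intro a ha b hb
    rw [Finset.mem_filter, Finset.mem_Icc] at ha hb
    by_contra hne
    rcases lt_trichotomy a b with h | h | h
    · exact key a b ha.1.1 h ha.2 hb.2
    · exact hne h
    · exact key b a hb.1.1 h hb.2 ha.2
  have hsub : ∀ u v : V, G.Adj u v →
      cnt u ≤ cnt v + ((Finset.Icc 1 (M - 1)).filter (fun n => q n u v)).card := by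
    intro u v hadj
    have hsubset : (Finset.Icc 1 (M - 1)).filter (fun n => inA S N (T n) u) ⊆
        ((Finset.Icc 1 (M - 1)).filter (fun n => inA S N (T n) v)) ∪
        ((Finset.Icc 1 (M - 1)).filter (fun n => q n u v)) := by
      intro n hn
      rw [Finset.mem_filter] at hn
      rw [Finset.mem_union, Finset.mem_filter, Finset.mem_filter]
      by_cases hq : q n u v
      · exact Or.inr ⟨hn.1, hq⟩
      · exact Or.inl ⟨hn.1, (hcross n hn.1 u v hadj hq).mp hn.2⟩
    calc cnt u ≤ (((Finset.Icc 1 (M - 1)).filter (fun n => inA S N (T n) v)) ∪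
        ((Finset.Icc 1 (M - 1)).filter (fun n => q n u v))).card :=
          Finset.card_le_card hsubset
      _ ≤ cnt v + ((Finset.Icc 1 (M - 1)).filter (fun n => q n u v)).card :=
          Finset.card_union_le _ _
  -- the per-pair bound
  have hpair : ∀ u v : V, μ u v * (f u - f v) ^ 2 ≤
      ∑ n ∈ Finset.Icc 1 (M - 1), (if q n u v then c ^ 2 else 0) := by
    intro u v
    have hrhs : (0 : ℝ) ≤ ∑ n ∈ Finset.Icc 1 (M - 1), (if q n u v then c ^ 2 else 0) := by
      apply Finset.sum_nonneg
      intro n _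
      split_ifs
      · exact sq_nonneg c
      · exact le_refl 0
    by_cases hadj : G.Adj u v
    · have hw : μ u v = 1 := if_pos hadj
      set D := (Finset.Icc 1 (M - 1)).filter (fun n => q n u v) with hDdef
      have hD1 : D.card ≤ 1 := hqone u v
      have hcu : cnt u ≤ cnt v + D.card := hsub u v hadj
      have hcv : cnt v ≤ cnt u + D.card := by
        have h1 := hsub v u hadj.symm
        have h2 : (Finset.Icc 1 (M - 1)).filter (fun n => q n v u) = D := by
          rw [hDdef]
          exact Finset.filter_congr (fun n _ => by rw [hqsymm n v u])
        rwa [h2] at h1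
      rcases Finset.eq_empty_or_nonempty D with hDe | ⟨n₀, hn₀⟩
      · have hcnteq : cnt u = cnt v := by
          rw [hDe, Finset.card_empty] at hcu hcv
          omega
        have : f u - f v = 0 := by simp [hfdef, hcnteq]
        rw [this]
        simpa using hrhs
      · have hfuv : f u - f v = ((cnt u : ℝ) - (cnt v : ℝ)) * c := by
          simp only [hfdef]; ring
        have habs : |(cnt u : ℝ) - (cnt v : ℝ)| ≤ 1 := by
          rw [abs_sub_le_iff]
          constructor
          · have h1 : cnt u ≤ cnt v + 1 := by omega
            have h1' : (cnt u : ℝ) ≤ (cnt v : ℝ) + 1 := by exact_mod_cast h1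
            linarith
          · have h1 : cnt v ≤ cnt u + 1 := by omega
            have h1' : (cnt v : ℝ) ≤ (cnt u : ℝ) + 1 := by exact_mod_cast h1
            linarith
        have hsq : (f u - f v) ^ 2 ≤ c ^ 2 := by
          rw [hfuv, mul_pow]
          have h2 : ((cnt u : ℝ) - (cnt v : ℝ)) ^ 2 ≤ 1 := by
            calc ((cnt u : ℝ) - (cnt v : ℝ)) ^ 2 = |(cnt u : ℝ) - (cnt v : ℝ)| ^ 2 :=
                  (sq_abs _).symm
              _ ≤ 1 ^ 2 := pow_le_pow_left₀ (abs_nonneg _) habs 2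
              _ = 1 := one_pow 2
          nlinarith [sq_nonneg c]
        have hmem := Finset.mem_filter.mp hn₀
        have hsingle : c ^ 2 ≤ ∑ n ∈ Finset.Icc 1 (M - 1), (if q n u v then c ^ 2 else 0) := by
          have hterm := Finset.single_le_sum
            (f := fun n => if q n u v then c ^ 2 else 0)
            (fun n _ => by by_cases h : q n u v <;> simp [h, sq_nonneg]) hmem.1
          simpa [hmem.2] using hterm
        rw [hw, one_mul]
        linarith
    · have hw : μ u v = 0 := if_neg hadj
      rw [hw, zero_mul]
      exact hrhs
  -- summing the per-pair bound
  have hsum_n : ∀ n ∈ Finset.Icc 1 (M - 1),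
      (∑ u : V, ∑ v : V, (if q n u v then c ^ 2 else 0)) ≤ 2 * c ^ 2 := by
    intro n hn
    rw [Finset.mem_Icc] at hn
    have hTn1 : T n + 1 ≤ N := by
      have : T n < T M := hmono (by omega)
      omega
    set p : V := rangeVert S N (T n) (by omega) with hpdef
    set r : V := rangeVert S N (T n + 1) hTn1 with hrdef
    have himp : ∀ u v : V, q n u v → (u = p ∧ v = r) ∨ (u = r ∧ v = p) := by
      intro u v hq
      rcases hq with ⟨h1, h2⟩ | ⟨h1, h2⟩
      · exact Or.inl ⟨Subtype.ext h1, Subtype.ext h2⟩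
      · exact Or.inr ⟨Subtype.ext h1, Subtype.ext h2⟩
    have hpoint : ∀ u v : V, (if q n u v then c ^ 2 else 0) ≤
        (if u = p ∧ v = r then c ^ 2 else 0) + (if u = r ∧ v = p then c ^ 2 else 0) := by
      intro u v
      by_cases hq : q n u v
      · rcases himp u v hq with h | h
        · rw [if_pos hq, if_pos h]
          have : (0:ℝ) ≤ (if u = r ∧ v = p then c ^ 2 else 0) := by
            split_ifs; exacts [sq_nonneg c, le_refl 0]
          linarith
        · rw [if_pos hq, if_pos h]
          have : (0:ℝ) ≤ (if u = p ∧ v = r then c ^ 2 else 0) := by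
            split_ifs; exacts [sq_nonneg c, le_refl 0]
          linarith
      · rw [if_neg hq]
        have h1 : (0:ℝ) ≤ (if u = p ∧ v = r then c ^ 2 else 0) := by
          split_ifs; exacts [sq_nonneg c, le_refl 0]
        have h2 : (0:ℝ) ≤ (if u = r ∧ v = p then c ^ 2 else 0) := by
          split_ifs; exacts [sq_nonneg c, le_refl 0]
        linarith
    have hone : ∀ a b : V, (∑ u : V, ∑ v : V, (if u = a ∧ v = b then c ^ 2 else 0)) = c ^ 2 := by
      intro a b
      have hinner : ∀ u : V, (∑ v : V, (if u = a ∧ v = b then c ^ 2 else 0)) =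
          (if u = a then c ^ 2 else 0) := by
        intro u
        by_cases hu : u = a
        · simp [hu]
          rw [Finset.sum_eq_single b (fun v _ hv => if_neg hv) (fun h => absurd (Finset.mem_univ b) h), if_pos rfl]
        · simp [hu]
      rw [Finset.sum_congr rfl (fun u _ => hinner u)]
      rw [Finset.sum_eq_single a (fun v _ hv => if_neg hv) (fun h => absurd (Finset.mem_univ a) h), if_pos rfl]
    calc (∑ u : V, ∑ v : V, (if q n u v then c ^ 2 else 0))
        ≤ ∑ u : V, ∑ v : V, ((if u = p ∧ v = r then c ^ 2 else 0) +
            (if u = r ∧ v = p then c ^ 2 else 0)) := by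
          apply Finset.sum_le_sum
          intro u _
          apply Finset.sum_le_sum
          intro v _
          exact hpoint u v
      _ = (∑ u : V, ∑ v : V, (if u = p ∧ v = r then c ^ 2 else 0)) +
            (∑ u : V, ∑ v : V, (if u = r ∧ v = p then c ^ 2 else 0)) := by
          rw [← Finset.sum_add_distrib]
          apply Finset.sum_congr rfl
          intro u _
          rw [← Finset.sum_add_distrib]
      _ = 2 * c ^ 2 := by rw [hone p r, hone r p]; ring
  -- the energy of the test function
  have henergy : energy μ f ≤ c := by
    have hIccCard : ((Finset.Icc 1 (M - 1)).card : ℝ) = (M : ℝ) - 1 := by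
      rw [Nat.card_Icc]
      push_cast [hM]
      ring
    have hstep1 : (∑ u : V, ∑ v : V, μ u v * (f u - f v) ^ 2) ≤
        ∑ u : V, ∑ v : V, ∑ n ∈ Finset.Icc 1 (M - 1), (if q n u v then c ^ 2 else 0) := by
      apply Finset.sum_le_sum
      intro u _
      apply Finset.sum_le_sum
      intro v _
      exact hpair u v
    have hstep2 : (∑ u : V, ∑ v : V, ∑ n ∈ Finset.Icc 1 (M - 1), (if q n u v then c ^ 2 else 0))
        = ∑ n ∈ Finset.Icc 1 (M - 1), ∑ u : V, ∑ v : V, (if q n u v then c ^ 2 else 0) := by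
      rw [Finset.sum_congr rfl (fun u _ => Finset.sum_comm), Finset.sum_comm]
    have hstep3 : (∑ n ∈ Finset.Icc 1 (M - 1), ∑ u : V, ∑ v : V,
        (if q n u v then c ^ 2 else 0)) ≤ ∑ n ∈ Finset.Icc 1 (M - 1), 2 * c ^ 2 :=
      Finset.sum_le_sum hsum_n
    have hstep4 : (∑ n ∈ Finset.Icc 1 (M - 1), 2 * c ^ 2 : ℝ) = ((M : ℝ) - 1) * (2 * c ^ 2) := by
      rw [Finset.sum_const, nsmul_eq_mul, hIccCard]
    have hcc : ((M : ℝ) - 1) * c = 1 := mul_inv_cancel₀ hMR.ne'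
    have hfin : ((M : ℝ) - 1) * (2 * c ^ 2) = 2 * c := by
      have : ((M : ℝ) - 1) * (2 * c ^ 2) = 2 * (((M : ℝ) - 1) * c) * c := by ring
      rw [this, hcc]; ring
    unfold energy
    have : (∑ u : V, ∑ v : V, μ u v * (f u - f v) ^ 2) ≤ 2 * c := by
      rw [← hfin, ← hstep4]
      calc (∑ u : V, ∑ v : V, μ u v * (f u - f v) ^ 2)
          ≤ ∑ u : V, ∑ v : V, ∑ n ∈ Finset.Icc 1 (M - 1), (if q n u v then c ^ 2 else 0) := hstep1
        _ = ∑ n ∈ Finset.Icc 1 (M - 1), ∑ u : V, ∑ v : V,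
            (if q n u v then c ^ 2 else 0) := hstep2
        _ ≤ ∑ n ∈ Finset.Icc 1 (M - 1), 2 * c ^ 2 := hstep3
    linarith
  -- lower bound for the energy of every admissible function
  have hlb : ∀ g : V → ℝ, g x = 1 → g y = 0 →
      ((T M : ℝ))⁻¹ ^ 2 ≤ energy μ g := by
    intro g hgx hgy
    set L := T M with hLdef
    set F : ℕ → ℝ := fun i => if h : i ≤ N then g (rangeVert S N i h) else 0 with hFdef
    have htel : ∑ i ∈ Finset.range L, (F i - F (i + 1)) = 1 := by
      rw [Finset.sum_range_sub' F L]
      have h0 : F 0 = 1 := by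
        simp only [hFdef]
        rw [dif_pos (Nat.zero_le N)]
        exact hgx
      have hL : F L = 0 := by
        simp only [hFdef]
        rw [dif_pos hTM]
        exact hgy
      rw [h0, hL]; ring
    have hex : ∃ i ∈ Finset.range L, ((L : ℝ))⁻¹ ≤ |F i - F (i + 1)| := by
      by_contra hcon
      push_neg at hcon
      have h1 : (1 : ℝ) ≤ ∑ i ∈ Finset.range L, |F i - F (i + 1)| := by
        calc (1 : ℝ) = |∑ i ∈ Finset.range L, (F i - F (i + 1))| := by rw [htel]; simp
          _ ≤ ∑ i ∈ Finset.range L, |F i - F (i + 1)| := Finset.abs_sum_le_sum_abs _ _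
      have h2 : (∑ i ∈ Finset.range L, |F i - F (i + 1)|) <
          ∑ i ∈ Finset.range L, ((L : ℝ))⁻¹ :=
        Finset.sum_lt_sum_of_nonempty (Finset.nonempty_range_iff.mpr hTMpos.ne') hcon
      rw [Finset.sum_const, Finset.card_range, nsmul_eq_mul] at h2
      have h3 : (L : ℝ) * ((L : ℝ))⁻¹ = 1 := mul_inv_cancel₀ (by positivity)
      linarith
    obtain ⟨i, hi, hFi⟩ := hex
    rw [Finset.mem_range] at hi
    have hiN : i ≤ N := le_trans hi.le hTM
    have hi1N : i + 1 ≤ N := le_trans hi hTM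
    have hcast : ((i : ℤ) + 1) = ((i + 1 : ℕ) : ℤ) := by push_cast; ring
    have hadj : G.Adj (rangeVert S N i hiN) (rangeVert S N (i + 1) hi1N) := by
      constructor
      · intro hh
        have hval : S ((i : ℕ) : ℤ) = S ((i + 1 : ℕ) : ℤ) := congrArg Subtype.val hh
        rw [← hcast] at hval
        exact step_ne hstep (i : ℤ) hval
      · exact ⟨i, lt_of_lt_of_le hi hTM, by rw [hcast]; rfl⟩
    have hFieq : F i = g (rangeVert S N i hiN) := by
      simp only [hFdef]; rw [dif_pos hiN]
    have hFi1eq : F (i + 1) = g (rangeVert S N (i + 1) hi1N) := by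
      simp only [hFdef]; rw [dif_pos hi1N]
    have hge := energy_ge_sq (f := g) hadj
    calc ((L : ℝ))⁻¹ ^ 2 ≤ |F i - F (i + 1)| ^ 2 := by
          apply pow_le_pow_left₀ (by positivity) hFi
      _ = (F i - F (i + 1)) ^ 2 := sq_abs _
      _ = (g (rangeVert S N i hiN) - g (rangeVert S N (i + 1) hi1N)) ^ 2 := by
          rw [hFieq, hFi1eq]
      _ ≤ energy μ g := hge
  -- conclude via the Nash–Williams bound
  rw [Reff, if_neg hxy]
  set Eset : Set ℝ := {E : ℝ | ∃ g : V → ℝ, g x = 1 ∧ g y = 0 ∧ E = energy μ g} with hEdef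
  have hmemf : energy μ f ∈ Eset := ⟨f, hfx, hfy, rfl⟩
  have hbdd : BddBelow Eset := by
    refine ⟨0, ?_⟩
    rintro E ⟨g, _, _, rfl⟩
    exact energy_nonneg' _ g
  have hub : sInf Eset ≤ c := le_trans (csInf_le hbdd hmemf) henergy
  have hlb' : ∀ E ∈ Eset, ((T M : ℝ))⁻¹ ^ 2 ≤ E := by
    rintro E ⟨g, hgx, hgy, rfl⟩
    exact hlb g hgx hgy
  have hpos : 0 < sInf Eset :=
    lt_of_lt_of_le (by positivity) (le_csInf ⟨energy μ f, hmemf⟩ hlb')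
  calc (M : ℝ) - 1 = c⁻¹ := by rw [hcdef, inv_inv]
    _ ≤ (sInf Eset)⁻¹ := by
        apply inv_anti₀ hpos hub
end
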